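/- arXiv:math/0507150 — 4 statements merged into one kernel-verified Lean document; each statement's English description precedes it below -/
import Mathlib

section
/- For positive integers m, n with gcd(mn, q) = 1 and a ∈ {0,1}, the sum of χ(m)·conj(χ)(n) over primitive characters χ mod q with χ(-1) = (-1)^a equals (1/2)·∑_{k | gcd(q, |m-n|)} φ(k)μ(q/k) + ((-1)^a/2)·∑_{k | gcd(q, m+n)} φ(k)μ(q/k). -/
open DirichletCharacter

lemma key_lift {d e q : ℕ} [NeZero q] (hd : d ∣ q) (he : e ∣ q) (u : (ZMod d)ˣ)
    (hu : ZMod.unitsMap (Nat.gcd_dvd_left d e) u = 1) :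
    ∃ v : (ZMod q)ˣ, ZMod.unitsMap hd v = u ∧ ZMod.unitsMap he v = 1 := by
  have hd0 : NeZero d := ⟨fun h => (NeZero.ne q) (by simpa [h] using hd)⟩
  have he0 : NeZero e := ⟨fun h => (NeZero.ne q) (by simpa [h] using he)⟩
  set u' := (u : ZMod d).val with hu'
  have h1 : u' ≡ 1 [MOD Nat.gcd d e] := by
    have : ((u' : ℕ) : ZMod (Nat.gcd d e)) = ((1 : ℕ) : ZMod (Nat.gcd d e)) := by
      have := congrArg (fun x : (ZMod (Nat.gcd d e))ˣ => (x : ZMod (Nat.gcd d e))) hu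
      simp only [ZMod.unitsMap_def, Units.coe_map, MonoidHom.coe_coe, Units.val_one] at this
      rw [hu', ZMod.natCast_val, Nat.cast_one]
      rwa [ZMod.castHom_apply] at this
    exact (ZMod.natCast_eq_natCast_iff _ _ _).mp this
  obtain ⟨k, hk1, hk2⟩ := Nat.chineseRemainder' h1
  have hkd : Nat.Coprime k d := by
    rw [← ZMod.isUnit_iff_coprime]
    rw [show ((k : ℕ) : ZMod d) = u' from (ZMod.natCast_eq_natCast_iff _ _ _).mpr hk1]
    rw [hu', ZMod.natCast_val, ZMod.cast_id]
    exact u.isUnit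
  have hke : Nat.Coprime k e := by
    rw [← ZMod.isUnit_iff_coprime]
    rw [show ((k : ℕ) : ZMod e) = ((1:ℕ) : ZMod e) from (ZMod.natCast_eq_natCast_iff _ _ _).mpr hk2]
    simp
  have hcop : Nat.Coprime k (Nat.lcm d e) :=
    Nat.Coprime.coprime_dvd_right (Nat.lcm_dvd_mul d e) (Nat.Coprime.mul_right hkd hke)
  have hl : Nat.lcm d e ∣ q := Nat.lcm_dvd hd he
  obtain ⟨v, hv⟩ := ZMod.unitsMap_surjective hl (ZMod.unitOfCoprime k hcop)
  refine ⟨v, ?_, ?_⟩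
  · have := congrArg (ZMod.unitsMap (Nat.dvd_lcm_left d e)) hv
    rw [← MonoidHom.comp_apply, ZMod.unitsMap_comp] at this
    ext
    rw [this]
    simp only [ZMod.unitsMap_def, Units.coe_map, MonoidHom.coe_coe, ZMod.coe_unitOfCoprime,
      ZMod.castHom_apply, ZMod.cast_natCast (Nat.dvd_lcm_left d e)]
    rw [show ((k : ℕ) : ZMod d) = u' from (ZMod.natCast_eq_natCast_iff _ _ _).mpr hk1]
    rw [hu', ZMod.natCast_val, ZMod.cast_id]
  · have := congrArg (ZMod.unitsMap (Nat.dvd_lcm_right d e)) hv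
    rw [← MonoidHom.comp_apply, ZMod.unitsMap_comp] at this
    ext
    rw [this]
    simp only [ZMod.unitsMap_def, Units.coe_map, MonoidHom.coe_coe, ZMod.coe_unitOfCoprime,
      ZMod.castHom_apply, ZMod.cast_natCast (Nat.dvd_lcm_right d e), Units.val_one]
    rw [show ((k : ℕ) : ZMod e) = ((1:ℕ) : ZMod e) from (ZMod.natCast_eq_natCast_iff _ _ _).mpr hk2]
    simp



lemma factorsThrough_gcd {d e q : ℕ} [NeZero q] (hd : d ∣ q) (he : e ∣ q)
    (ψ : DirichletCharacter ℂ d) (h : (changeLevel hd ψ).FactorsThrough e) :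
    ψ.FactorsThrough (Nat.gcd d e) := by
  have hd0 : NeZero d := ⟨fun h0 => (NeZero.ne q) (by simpa [h0] using hd)⟩
  rw [factorsThrough_iff_ker_unitsMap (Nat.gcd_dvd_left d e)]
  intro u hu
  obtain ⟨v, hv1, hv2⟩ := key_lift hd he u (by rwa [MonoidHom.mem_ker] at hu)
  rw [MonoidHom.mem_ker]
  have h1 : (changeLevel hd ψ).toUnitHom v = ψ.toUnitHom u := by
    rw [changeLevel_toUnitHom, MonoidHom.comp_apply, hv1]
  have h2 : (changeLevel hd ψ).toUnitHom v = 1 := by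
    have := (factorsThrough_iff_ker_unitsMap he).mp h
    exact this (by rw [MonoidHom.mem_ker, hv2])
  rw [← h1, h2]

lemma conductor_changeLevel_of_isPrimitive {d q : ℕ} [NeZero q] (hd : d ∣ q)
    (ψ : DirichletCharacter ℂ d) (hψ : ψ.IsPrimitive) :
    (changeLevel hd ψ).conductor = d := by
  have hd0 : d ≠ 0 := fun h0 => (NeZero.ne q) (by simpa [h0] using hd)
  set e := (changeLevel hd ψ).conductor with he_def
  have he : e ∣ q := conductor_dvd_level _
  have he0 : e ≠ 0 := fun h0 => (NeZero.ne q) (by simpa [h0] using he)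
  have hft : (changeLevel hd ψ).FactorsThrough e := factorsThrough_conductor _
  have h2 : ψ.FactorsThrough (Nat.gcd d e) := factorsThrough_gcd hd he ψ hft
  have h3 : d ≤ Nat.gcd d e := by
    have h4 : ψ.conductor ≤ Nat.gcd d e := Nat.sInf_le ((mem_conductorSet_iff ψ).mpr h2)
    rwa [hψ] at h4
  have hde : d ∣ e := by
    have : Nat.gcd d e = d :=
      le_antisymm (Nat.gcd_le_left e (Nat.pos_of_ne_zero hd0)) h3
    rw [← this]; exact Nat.gcd_dvd_right d e
  have hed : e ≤ d :=
    Nat.sInf_le ((mem_conductorSet_iff _).mpr (changeLevel_factorsThrough _ hd))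
  exact le_antisymm hed (Nat.le_of_dvd (Nat.pos_of_ne_zero he0) hde)



lemma χ₀_isPrimitive {q d : ℕ} [NeZero q] {χ : DirichletCharacter ℂ q}
    (h : χ.FactorsThrough d) (hcond : χ.conductor = d) : h.χ₀.IsPrimitive := by
  have hd0 : d ≠ 0 := fun h0 => (NeZero.ne q) (Nat.eq_zero_of_zero_dvd (h0 ▸ h.dvd))
  have h1 : χ.conductor ≤ h.χ₀.conductor := conductor_le_conductor_mem_conductorSet (χ := χ) h
  have h2 : h.χ₀.conductor ∣ d := conductor_dvd_level _
  exact le_antisymm (Nat.le_of_dvd (Nat.pos_of_ne_zero hd0) h2) (hcond ▸ h1)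

open Finset in
open scoped Classical in
lemma sum_chars_decompose {q : ℕ} [NeZero q] (F : ∀ d : ℕ, DirichletCharacter ℂ d → ℂ)
    (hF : ∀ (d : ℕ) (hd : d ∣ q) (ψ : DirichletCharacter ℂ d), F q (changeLevel hd ψ) = F d ψ) :
    ∑ χ : DirichletCharacter ℂ q, F q χ =
      ∑ d ∈ q.divisors, ∑ ψ : DirichletCharacter ℂ d, (if ψ.IsPrimitive then F d ψ else 0) := by
  classical
  rw [← Finset.sum_fiberwise_of_maps_to (g := fun χ : DirichletCharacter ℂ q => χ.conductor)
      (fun χ _ => Nat.mem_divisors.mpr ⟨conductor_dvd_level χ, NeZero.ne q⟩)]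
  refine Finset.sum_congr rfl fun d hd => ?_
  have hdq : d ∣ q := Nat.dvd_of_mem_divisors hd
  rw [← Finset.sum_filter]
  refine (Finset.sum_bij (fun ψ _ => changeLevel hdq ψ) ?_ ?_ ?_ ?_).symm
  · intro ψ hψ
    simp only [mem_filter, mem_univ, true_and] at hψ ⊢
    exact conductor_changeLevel_of_isPrimitive hdq ψ hψ
  · intro ψ₁ h₁ ψ₂ h₂ hh
    exact changeLevel_injective hdq hh
  · intro χ hχ
    simp only [mem_filter, mem_univ, true_and] at hχ
    have h : χ.FactorsThrough d := hχ ▸ factorsThrough_conductor χ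
    refine ⟨h.χ₀, by simp [χ₀_isPrimitive h hχ], ?_⟩
    exact h.eq_changeLevel.symm
  · intro ψ hψ
    exact (hF d hdq ψ).symm


lemma T_eval (e : ℕ) [NeZero e] (z w : ℤ) (hz : IsUnit ((z : ZMod e))) (hw : IsUnit ((w : ZMod e))) :
    ∑ χ : DirichletCharacter ℂ e, χ ((z : ZMod e)) * (starRingEnd ℂ) (χ ((w : ZMod e))) =
      if (e : ℤ) ∣ z - w then (e.totient : ℂ) else 0 := by
  have hstar : ∀ χ : DirichletCharacter ℂ e,
      (starRingEnd ℂ) (χ ((w : ZMod e))) = χ ((w : ZMod e))⁻¹ := by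
    intro χ
    obtain ⟨u, hu⟩ := hw
    rw [← RCLike.star_def, MulChar.star_apply', MulChar.inv_apply, ← hu, Ring.inverse_unit,
      ZMod.inv_coe_unit]
  simp_rw [hstar]
  have hterm : ∀ χ : DirichletCharacter ℂ e,
      χ ((z : ZMod e)) * χ ((w : ZMod e))⁻¹ = χ (((w : ZMod e))⁻¹ * (z : ZMod e)) := by
    intro χ; rw [map_mul, mul_comm]
  simp_rw [hterm]
  rw [DirichletCharacter.sum_characters_eq]
  have hcond : ((w : ZMod e))⁻¹ * (z : ZMod e) = 1 ↔ (e : ℤ) ∣ z - w := by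
    rw [ZMod.inv_mul_eq_one_of_isUnit hw, eq_comm, ZMod.intCast_eq_intCast_iff,
      Int.modEq_iff_dvd, ← neg_sub z w, dvd_neg]
  rw [if_congr hcond rfl rfl]




lemma changeLevel_intCast {d e : ℕ} (hd : d ∣ e) (ψ : DirichletCharacter ℂ d) (z : ℤ)
    (hz : IsUnit ((z : ZMod e))) : (changeLevel hd ψ) ((z : ZMod e)) = ψ ((z : ZMod d)) := by
  have h := changeLevel_eq_cast_of_dvd ψ hd hz.unit
  rw [IsUnit.unit_spec] at h
  rw [h, ZMod.cast_intCast hd]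

lemma isUnit_cast_of_dvd {d e : ℕ} (hd : d ∣ e) (z : ℤ) (hz : IsUnit ((z : ZMod e))) :
    IsUnit ((z : ZMod d)) := by
  have := ZMod.isUnit_cast_of_dvd hd hz.unit
  rwa [IsUnit.unit_spec, ZMod.cast_intCast hd] at this

open Finset ArithmeticFunction in
open scoped Classical in
lemma P_eval (q : ℕ) [NeZero q] (z w : ℤ) (hz : IsUnit ((z : ZMod q))) (hw : IsUnit ((w : ZMod q))) :
    (∑ χ : DirichletCharacter ℂ q,
        if χ.IsPrimitive then χ ((z : ZMod q)) * (starRingEnd ℂ) (χ ((w : ZMod q))) else 0) =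
      ((∑ k ∈ (Nat.gcd q (z - w).natAbs).divisors,
          (Nat.totient k : ℤ) * ArithmeticFunction.moebius (q / k) : ℤ) : ℂ) := by
  set F : ∀ d : ℕ, DirichletCharacter ℂ d → ℂ :=
    fun d χ => χ ((z : ZMod d)) * (starRingEnd ℂ) (χ ((w : ZMod d))) with hFdef
  set f : ℕ → ℂ := fun d => ∑ χ : DirichletCharacter ℂ d, if χ.IsPrimitive then F d χ else 0
    with hfdef
  set g : ℕ → ℂ := fun d => if (d : ℤ) ∣ z - w then (d.totient : ℂ) else 0 with hgdef
  have key : ∀ e > 0, e ∈ {d | d ∣ q} → (∑ i ∈ e.divisors, f i) = g e := by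
    intro e he heq
    haveI : NeZero e := ⟨he.ne'⟩
    have hze : IsUnit ((z : ZMod e)) := isUnit_cast_of_dvd heq z hz
    have hwe : IsUnit ((w : ZMod e)) := isUnit_cast_of_dvd heq w hw
    have hF : ∀ (d : ℕ) (hd : d ∣ e) (ψ : DirichletCharacter ℂ d),
        F e (changeLevel hd ψ) = F d ψ := by
      intro d hd ψ
      simp only [hFdef]
      rw [changeLevel_intCast hd ψ z hze, changeLevel_intCast hd ψ w hwe]
    have := sum_chars_decompose F hF
    rw [← this, hgdef]
    exact T_eval e z w hze hwe
  have hmob := (sum_eq_iff_sum_smul_moebius_eq_on {d | d ∣ q} (fun m n hmn hn => hmn.trans hn)).mp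
    key q (Nat.pos_of_ne_zero (NeZero.ne q)) (dvd_refl q)
  show f q = _
  rw [← hmob, Nat.sum_divisorsAntidiagonal' (f := fun x y => (moebius x : ℤ) • g y)]
  have hdiv : (Nat.gcd q (z - w).natAbs).divisors = q.divisors.filter (· ∣ (z - w).natAbs) := by
    ext k
    simp only [Nat.mem_divisors, mem_filter, Nat.dvd_gcd_iff]
    have h1 : Nat.gcd q (z - w).natAbs ≠ 0 := fun h => NeZero.ne q (Nat.eq_zero_of_gcd_eq_zero_left h)
    have h2 := NeZero.ne q
    tauto
  rw [hdiv, Finset.sum_filter, Int.cast_sum]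
  refine Finset.sum_congr rfl fun k hk => ?_
  have hcond : ((k : ℤ) ∣ z - w) ↔ (k ∣ (z - w).natAbs) := by
    rw [← Int.natCast_dvd_natCast, Int.dvd_natAbs]
  simp only [hgdef]
  split_ifs with h1 h2 h2
  · rw [zsmul_eq_mul]; push_cast; ring
  · exact absurd (hcond.mp h1) h2
  · exact absurd (hcond.mpr h2) h1
  · simp

open Finset in
open scoped Classical in
/-- Equation (2.1): orthogonality for primitive characters of fixed parity. -/
theorem sum_primitive_char_parity (q m n : ℕ) (hq : 0 < q) (hm : 0 < m) (hn : 0 < n)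
    (hmn : Nat.gcd (m * n) q = 1) (a : ℕ) (ha : a = 0 ∨ a = 1) :
    (∑ χ : DirichletCharacter ℂ q,
        if χ.IsPrimitive ∧ χ (-1) = (-1 : ℂ) ^ a then χ m * (starRingEnd ℂ) (χ n) else 0) =
      (1 / 2 : ℂ) * ((∑ k ∈ (Nat.gcd q ((m : ℤ) - n).natAbs).divisors,
          (Nat.totient k : ℤ) * ArithmeticFunction.moebius (q / k) : ℤ) : ℂ) +
        ((-1 : ℂ) ^ a / 2) * ((∑ k ∈ (Nat.gcd q (m + n)).divisors,
          (Nat.totient k : ℤ) * ArithmeticFunction.moebius (q / k) : ℤ) : ℂ) := by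
  haveI : NeZero q := ⟨hq.ne'⟩
  have hmq : Nat.Coprime m q := Nat.Coprime.coprime_dvd_left (dvd_mul_right m n) hmn
  have hnq : Nat.Coprime n q := Nat.Coprime.coprime_dvd_left (dvd_mul_left n m) hmn
  have hum : IsUnit ((m : ZMod q)) := (ZMod.isUnit_iff_coprime m q).mpr hmq
  have hun : IsUnit ((n : ZMod q)) := (ZMod.isUnit_iff_coprime n q).mpr hnq
  have h1 := P_eval q (m : ℤ) (n : ℤ) (by rw [Int.cast_natCast]; exact hum)
    (by rw [Int.cast_natCast]; exact hun)
  have h2 := P_eval q (-(m : ℤ)) (n : ℤ)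
    (by rw [Int.cast_neg, Int.cast_natCast]; exact hum.neg)
    (by rw [Int.cast_natCast]; exact hun)
  simp only [Int.cast_natCast, Int.cast_neg] at h1 h2
  have habs : ((-(m : ℤ)) - (n : ℤ)).natAbs = m + n := by
    omega
  rw [habs] at h2
  have hneg : ∀ χ : DirichletCharacter ℂ q, χ (-((m : ℕ) : ZMod q)) = χ (-1) * χ ((m : ℕ) : ZMod q) := by
    intro χ
    rw [← map_mul, neg_one_mul]
  simp only [hneg] at h2
  have hsplit : ∀ χ : DirichletCharacter ℂ q,
      (if χ.IsPrimitive ∧ χ (-1) = (-1 : ℂ) ^ a then χ m * (starRingEnd ℂ) (χ n) else 0)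
      = (1 / 2 : ℂ) * (if χ.IsPrimitive then χ ((m : ZMod q)) * (starRingEnd ℂ) (χ ((n : ZMod q))) else 0)
        + ((-1 : ℂ) ^ a / 2) * (if χ.IsPrimitive then
            χ (-1) * χ ((m : ZMod q)) * (starRingEnd ℂ) (χ ((n : ZMod q))) else 0) := by
    intro χ
    by_cases hP : χ.IsPrimitive
    · rw [if_pos hP, if_pos hP]
      rcases DirichletCharacter.even_or_odd χ with hpar | hpar <;>
        rcases ha with rfl | rfl <;>
        rw [hpar] <;> simp only [pow_zero, pow_one]
      · rw [if_pos ⟨hP, trivial⟩]; ring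
      · rw [if_neg (fun hc => absurd hc.2 (by norm_num))]; ring
      · rw [if_neg (fun hc => absurd hc.2 (by norm_num))]; ring
      · rw [if_pos ⟨hP, trivial⟩]; ring
    · simp [hP]
  rw [Finset.sum_congr rfl (fun χ _ => hsplit χ), Finset.sum_add_distrib, ← Finset.mul_sum,
    ← Finset.mul_sum, h1]
  congr 1
  rw [← h2]
end

section
/- For a positive integer q and a real number x ≥ 2, ∑_{n ≤ x, gcd(n,q)=1} 1/n = (φ(q)/q)·(log x + γ + ∑_{p | q} (log p)/(p-1)) + O(2^{ω(q)} (log x)/x), where γ is the Euler–Mascheroni constant. -/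
open Finset Real

/-- Quantitative harmonic sum estimate at integers. -/
lemma aux_harm (N : ℕ) (hN : 1 ≤ N) :
    |(∑ n ∈ Finset.Icc 1 N, (1 : ℝ) / n) - Real.log N - Real.eulerMascheroniConstant|
      ≤ 1 / N := by
  have hNR : (0 : ℝ) < N := by exact_mod_cast hN
  have hsum : (∑ n ∈ Finset.Icc 1 N, (1 : ℝ) / n) = ((harmonic N : ℚ) : ℝ) := by
    rw [harmonic_eq_sum_Icc]
    push_cast
    simp [one_div]
  have h1 := Real.eulerMascheroniSeq_lt_eulerMascheroniConstant N
  have h2 := Real.eulerMascheroniConstant_lt_eulerMascheroniSeq' N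
  rw [Real.eulerMascheroniSeq] at h1
  rw [Real.eulerMascheroniSeq', if_neg (by omega : N ≠ 0)] at h2
  have hlog : Real.log (N + 1) - Real.log N ≤ 1 / N := by
    rw [← Real.log_div (by positivity) (by positivity)]
    have := Real.log_le_sub_one_of_pos (show (0:ℝ) < (N + 1) / N by positivity)
    calc Real.log ((N + 1) / N) ≤ (N + 1) / N - 1 := this
      _ = 1 / N := by field_simp; ring
  rw [hsum, abs_le]
  constructor
  · nlinarith [Real.log_le_log (by positivity : (0:ℝ) < N) (by linarith : (N:ℝ) ≤ N + 1)]
  · nlinarith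

/-- Quantitative harmonic sum estimate at real points. -/
lemma aux_Hx (x : ℝ) (hx : 1 ≤ x) :
    |(∑ n ∈ Finset.Icc 1 ⌊x⌋₊, (1 : ℝ) / n) - Real.log x - Real.eulerMascheroniConstant|
      ≤ 4 / x := by
  have hx0 : (0 : ℝ) < x := by linarith
  have hN1 : 1 ≤ ⌊x⌋₊ := Nat.le_floor (by exact_mod_cast hx)
  set N := ⌊x⌋₊ with hNdef
  have hNR : (1 : ℝ) ≤ N := by exact_mod_cast hN1
  have hNx : (N : ℝ) ≤ x := Nat.floor_le (by linarith)
  have hxN1 : x < N + 1 := Nat.lt_floor_add_one x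
  have h1 := aux_harm N hN1
  have hlog2 : Real.log x - Real.log N ≤ 1 / N := by
    rw [← Real.log_div (by positivity) (by positivity)]
    have := Real.log_le_sub_one_of_pos (show (0:ℝ) < x / N by positivity)
    calc Real.log (x / N) ≤ x / N - 1 := this
      _ = (x - N) / N := by field_simp
      _ ≤ 1 / N := by
          apply div_le_div_of_nonneg_right _ (by linarith)
          · linarith
  have hlogmono : Real.log N ≤ Real.log x := Real.log_le_log (by linarith) hNx
  have key : |(∑ n ∈ Finset.Icc 1 N, (1 : ℝ) / n) - Real.log x
      - Real.eulerMascheroniConstant| ≤ 2 / N := by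
    have h12 : (1 : ℝ) / N + 1 / N = 2 / N := by ring
    have hNinv : (0 : ℝ) ≤ 1 / N := by positivity
    rw [abs_le] at h1 ⊢
    constructor <;> linarith [h1.1, h1.2]
  refine key.trans ?_
  rw [div_le_div_iff₀ (by linarith) hx0]
  nlinarith

/-- Coprimality via prime factors. -/
lemma aux_coprime_iff (n q : ℕ) (hq : 0 < q) :
    Nat.gcd n q = 1 ↔ ∀ p ∈ q.primeFactors, ¬ p ∣ n := by
  constructor
  · intro h p hp hpn
    have hpq : p ∣ q := Nat.dvd_of_mem_primeFactors hp
    have : p ∣ 1 := h ▸ Nat.dvd_gcd hpn hpq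
    exact (Nat.prime_of_mem_primeFactors hp).one_lt.ne' (Nat.dvd_one.mp this)
  · intro h
    by_contra hg
    have hgpos : 0 < Nat.gcd n q := Nat.gcd_pos_of_pos_right n hq
    have h2 : 2 ≤ Nat.gcd n q := by omega
    set p := (Nat.gcd n q).minFac with hp
    have hpprime : p.Prime := Nat.minFac_prime (by omega)
    have hpg : p ∣ Nat.gcd n q := Nat.minFac_dvd _
    have hpn : p ∣ n := hpg.trans (Nat.gcd_dvd_left _ _)
    have hpq : p ∣ q := hpg.trans (Nat.gcd_dvd_right _ _)
    exact h p (Nat.mem_primeFactors.mpr ⟨hpprime, hpq, hq.ne'⟩) hpn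

/-- Product of indicator functions over a set of primes. -/
lemma aux_prod_ind (n : ℕ) (t : Finset ℕ) (ht : ∀ p ∈ t, Nat.Prime p) :
    (∏ p ∈ t, (if p ∣ n then (1 : ℝ) else 0))
      = if (∏ p ∈ t, p) ∣ n then (1 : ℝ) else 0 := by
  by_cases h : ∀ p ∈ t, p ∣ n
  · rw [Finset.prod_congr rfl (fun p hp => if_pos (h p hp)), Finset.prod_const_one,
      if_pos (Finset.prod_primes_dvd n (fun p hp => (ht p hp).prime) h)]
  · push_neg at h
    obtain ⟨p, hp, hpn⟩ := h
    have h0 : (∏ p ∈ t, (if p ∣ n then (1 : ℝ) else 0)) = 0 :=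
      Finset.prod_eq_zero hp (by rw [if_neg hpn])
    rw [h0, if_neg fun hdvd => hpn ((Finset.dvd_prod_of_mem _ hp).trans hdvd)]

/-- Inclusion-exclusion indicator for coprimality. -/
lemma aux_indicator (n q : ℕ) (hq : 0 < q) :
    (if Nat.gcd n q = 1 then (1 : ℝ) else 0)
      = ∑ t ∈ q.primeFactors.powerset,
          (-1 : ℝ) ^ t.card * (if (∏ p ∈ t, p) ∣ n then 1 else 0) := by
  have expand := Finset.prod_add (fun p : ℕ => -(if p ∣ n then (1 : ℝ) else 0))
    (fun _ : ℕ => (1 : ℝ)) q.primeFactors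
  have lhs_eq : (∏ p ∈ q.primeFactors, (-(if p ∣ n then (1 : ℝ) else 0) + 1))
      = if Nat.gcd n q = 1 then (1 : ℝ) else 0 := by
    by_cases h : Nat.gcd n q = 1
    · rw [if_pos h]
      apply Finset.prod_eq_one
      intro p hp
      rw [if_neg ((aux_coprime_iff n q hq).mp h p hp)]
      ring
    · rw [if_neg h]
      rw [aux_coprime_iff n q hq] at h
      push_neg at h
      obtain ⟨p, hp, hpn⟩ := h
      apply Finset.prod_eq_zero hp
      rw [if_pos hpn]
      ring
  rw [← lhs_eq, expand]
  apply Finset.sum_congr rfl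
  intro t ht
  rw [Finset.prod_const_one, mul_one]
  have htp : ∀ p ∈ t, Nat.Prime p := fun p hp =>
    Nat.prime_of_mem_primeFactors (Finset.mem_powerset.mp ht hp)
  rw [← aux_prod_ind n t htp]
  rw [show (fun p : ℕ => -(if p ∣ n then (1 : ℝ) else 0))
      = fun p : ℕ => (-1) * (if p ∣ n then (1 : ℝ) else 0) by funext p; ring,
    Finset.prod_mul_distrib, Finset.prod_const]

/-- Reindexing a sum over multiples. -/
lemma aux_reindex (D N : ℕ) (hD : 0 < D) :
    ∑ n ∈ (Finset.Icc 1 N).filter (fun n => D ∣ n), (1 : ℝ) / n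
      = (1 / D) * ∑ m ∈ Finset.Icc 1 (N / D), (1 : ℝ) / m := by
  rw [Finset.mul_sum]
  refine Finset.sum_nbij' (fun n => n / D) (fun m => D * m) ?_ ?_ ?_ ?_ ?_
  · intro n hn
    simp only [Finset.mem_filter, Finset.mem_Icc] at hn ⊢
    obtain ⟨⟨h1, h2⟩, h3⟩ := hn
    constructor
    · exact Nat.one_le_div_iff hD |>.mpr (Nat.le_of_dvd (by omega) h3)
    · exact Nat.div_le_div_right h2
  · intro m hm
    simp only [Finset.mem_Icc] at hm
    simp only [Finset.mem_filter, Finset.mem_Icc]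
    refine ⟨⟨Nat.mul_pos hD hm.1, ?_⟩, dvd_mul_right D m⟩
    calc D * m ≤ D * (N / D) := Nat.mul_le_mul_left D hm.2
      _ ≤ N := Nat.mul_div_le N D
  · intro n hn
    simp only [Finset.mem_filter] at hn
    exact Nat.mul_div_cancel' hn.2
  · intro m hm
    exact Nat.mul_div_cancel_left m hD
  · intro n hn
    simp only [Finset.mem_filter, Finset.mem_Icc] at hn
    have : (D : ℝ) * (n / D : ℕ) = (n : ℝ) := by
      rw [← Nat.cast_mul, Nat.mul_div_cancel' hn.2]
    rw [div_mul_div_comm, one_mul, this]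

/-- Per-term estimate. -/
lemma aux_term (x : ℝ) (hx : 2 ≤ x) (D : ℕ) (hD : 1 ≤ D) :
    |(1 / D) * (∑ m ∈ Finset.Icc 1 (⌊x⌋₊ / D), (1 : ℝ) / m)
      - (1 / D) * (Real.log x + Real.eulerMascheroniConstant - Real.log D)| ≤ 4 / x := by
  have hx0 : (0 : ℝ) < x := by linarith
  have hDR : (1 : ℝ) ≤ D := by exact_mod_cast hD
  have hDR0 : (0 : ℝ) < D := by linarith
  by_cases hcase : D ≤ ⌊x⌋₊
  · -- main case : x / D ≥ 1
    have hfloor : ⌊x⌋₊ / D = ⌊x / D⌋₊ := (Nat.floor_div_natCast x D).symm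
    have hDx : (D : ℝ) ≤ x := le_trans (by exact_mod_cast hcase)
      (Nat.floor_le (by linarith))
    have hy : (1 : ℝ) ≤ x / D := (one_le_div hDR0).mpr hDx
    have h1 := aux_Hx (x / D) hy
    rw [Real.log_div (by linarith) (by linarith)] at h1
    rw [hfloor, ← mul_sub, abs_mul, abs_of_pos (by positivity : (0:ℝ) < 1 / (D:ℝ))]
    have heq : (∑ m ∈ Finset.Icc 1 ⌊x / D⌋₊, (1 : ℝ) / m)
        - (Real.log x + Real.eulerMascheroniConstant - Real.log D)
        = (∑ m ∈ Finset.Icc 1 ⌊x / D⌋₊, (1 : ℝ) / m)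
          - (Real.log x - Real.log D) - Real.eulerMascheroniConstant := by ring
    rw [heq]
    calc (1 / D) * |(∑ m ∈ Finset.Icc 1 ⌊x / D⌋₊, (1 : ℝ) / m)
          - (Real.log x - Real.log D) - Real.eulerMascheroniConstant|
        ≤ (1 / D) * (4 / (x / D)) := by
          apply mul_le_mul_of_nonneg_left h1 (by positivity)
      _ = 4 / x := by field_simp
  · -- degenerate case : D > ⌊x⌋₊, so inner sum is empty
    push_neg at hcase
    have hzero : ⌊x⌋₊ / D = 0 := Nat.div_eq_of_lt hcase
    rw [hzero]
    have : Finset.Icc 1 0 = (∅ : Finset ℕ) := Finset.Icc_eq_empty (by omega)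
    rw [this, Finset.sum_empty, mul_zero, zero_sub, abs_neg, abs_mul,
      abs_of_pos (by positivity : (0:ℝ) < 1 / (D:ℝ))]
    have hxD : x < D := by
      have h1 : x < (⌊x⌋₊ : ℝ) + 1 := Nat.lt_floor_add_one x
      have h2 : ((⌊x⌋₊ : ℝ) + 1) ≤ D := by exact_mod_cast hcase
      linarith
    have hlogle : Real.log x ≤ Real.log D := Real.log_le_log hx0 (le_of_lt hxD)
    have hgam0 : (0 : ℝ) < Real.eulerMascheroniConstant := by
      linarith [Real.one_half_lt_eulerMascheroniConstant]
    have hgam1 : Real.eulerMascheroniConstant < 1 := by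
      linarith [Real.eulerMascheroniConstant_lt_two_thirds]
    have habs : |Real.log x + Real.eulerMascheroniConstant - Real.log D|
        ≤ (Real.log D - Real.log x) + 1 := by
      rw [abs_le]; constructor <;> nlinarith
    have hlogDx : Real.log D - Real.log x ≤ D / x - 1 := by
      rw [← Real.log_div (by linarith) (by linarith)]
      exact Real.log_le_sub_one_of_pos (by positivity)
    calc (1 / D) * |Real.log x + Real.eulerMascheroniConstant - Real.log D|
        ≤ (1 / D) * (D / x) := by
          apply mul_le_mul_of_nonneg_left _ (by positivity)
          calc |Real.log x + Real.eulerMascheroniConstant - Real.log D|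
              ≤ (Real.log D - Real.log x) + 1 := habs
            _ ≤ (D / x - 1) + 1 := by linarith
            _ = D / x := by ring
      _ = 1 / x := by field_simp
      _ ≤ 4 / x := by gcongr <;> norm_num

/-- Main-term identity, by induction on the finset of primes. -/
lemma aux_main (s : Finset ℕ) (hs : ∀ p ∈ s, 2 ≤ p) : ∀ c : ℝ,
    ∑ t ∈ s.powerset, (-1 : ℝ) ^ t.card / (∏ p ∈ t, (p : ℝ))
        * (c - Real.log (∏ p ∈ t, (p : ℝ)))
      = (∏ p ∈ s, (1 - 1 / (p : ℝ))) * (c + ∑ p ∈ s, Real.log p / ((p : ℝ) - 1)) := by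
  classical
  induction s using Finset.induction_on with
  | empty => intro c; simp
  | @insert a s ha ih =>
    intro c
    have hs' : ∀ p ∈ s, 2 ≤ p := fun p hp => hs p (Finset.mem_insert_of_mem hp)
    have ha2 : 2 ≤ a := hs a (Finset.mem_insert_self a s)
    have haR : (2 : ℝ) ≤ a := by exact_mod_cast ha2
    have haR0 : (0 : ℝ) < a := by linarith
    rw [Finset.sum_powerset_insert ha]
    have h2 : ∑ t ∈ s.powerset, (-1 : ℝ) ^ (insert a t).card
          / (∏ p ∈ insert a t, (p : ℝ)) * (c - Real.log (∏ p ∈ insert a t, (p : ℝ)))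
        = -(1 / a) * ∑ t ∈ s.powerset, (-1 : ℝ) ^ t.card / (∏ p ∈ t, (p : ℝ))
            * ((c - Real.log a) - Real.log (∏ p ∈ t, (p : ℝ))) := by
      rw [Finset.mul_sum]
      apply Finset.sum_congr rfl
      intro t ht
      have hat : a ∉ t := fun h => ha (Finset.mem_powerset.mp ht h)
      have hDt : (0 : ℝ) < ∏ p ∈ t, (p : ℝ) := by
        apply Finset.prod_pos
        intro p hp
        have := hs' p (Finset.mem_powerset.mp ht hp)
        positivity
      rw [Finset.card_insert_of_notMem hat, Finset.prod_insert hat,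
        Real.log_mul (by linarith) (by linarith), pow_succ]
      field_simp
      ring
    rw [h2, ih hs' c, ih hs' (c - Real.log a), Finset.prod_insert ha, Finset.sum_insert ha]
    have ha1 : (a : ℝ) - 1 ≠ 0 := by linarith
    have ha0 : (a : ℝ) ≠ 0 := by linarith
    field_simp
    ring

/-- totient over q as a real product. -/
lemma aux_totient (q : ℕ) (hq : 0 < q) :
    (Nat.totient q : ℝ) / q = ∏ p ∈ q.primeFactors, (1 - 1 / (p : ℝ)) := by
  have h := Nat.totient_eq_mul_prod_factors q
  have hR : (Nat.totient q : ℝ) = q * ∏ p ∈ q.primeFactors, (1 - 1 / (p : ℝ)) := by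
    have := congrArg (fun r : ℚ => (r : ℝ)) h
    push_cast at this ⊢
    simpa [one_div] using this
  rw [hR]
  field_simp

open Finset Real in
/-- Lemma 4 (first part): `∑_{n ≤ x, (n,q)=1} 1/n
  = (φ(q)/q)(log x + γ + ∑_{p|q} log p/(p-1)) + O(2^{ω(q)} log x / x)`. -/
theorem sum_inv_coprime :
    ∃ C : ℝ, ∀ q : ℕ, 0 < q → ∀ x : ℝ, 2 ≤ x →
      |(∑ n ∈ (Finset.Icc 1 ⌊x⌋₊).filter (fun n => Nat.gcd n q = 1), (1 : ℝ) / n) -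
        ((Nat.totient q : ℝ) / q) *
          (Real.log x + Real.eulerMascheroniConstant +
            ∑ p ∈ q.primeFactors, Real.log p / (p - 1))| ≤
        C * 2 ^ q.primeFactors.card * Real.log x / x := by
  use 8
  intro q hq x hx
  have hx0 : (0 : ℝ) < x := by linarith
  set N := ⌊x⌋₊ with hN
  set P := q.primeFactors with hP
  -- Step 1: rewrite the LHS sum with the inclusion-exclusion indicator
  have step1 : (∑ n ∈ (Finset.Icc 1 N).filter (fun n => Nat.gcd n q = 1), (1 : ℝ) / n)
      = ∑ t ∈ P.powerset, (-1 : ℝ) ^ t.card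
          * ∑ n ∈ (Finset.Icc 1 N).filter (fun n => (∏ p ∈ t, p) ∣ n), (1 : ℝ) / n := by
    rw [Finset.sum_filter]
    have : ∀ n ∈ Finset.Icc 1 N, (if Nat.gcd n q = 1 then (1 : ℝ) / n else 0)
        = ∑ t ∈ P.powerset, (-1 : ℝ) ^ t.card
            * (if (∏ p ∈ t, p) ∣ n then (1 : ℝ) / n else 0) := by
      intro n _
      rw [show (if Nat.gcd n q = 1 then (1 : ℝ) / n else 0)
          = (1 / n) * (if Nat.gcd n q = 1 then (1 : ℝ) else 0) by
            split <;> simp]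
      rw [aux_indicator n q hq, Finset.mul_sum]
      apply Finset.sum_congr rfl
      intro t _
      split <;> simp <;> ring
    rw [Finset.sum_congr rfl this, Finset.sum_comm]
    apply Finset.sum_congr rfl
    intro t _
    rw [Finset.sum_filter, Finset.mul_sum]
  -- Step 2: per-subset analysis
  have hprime : ∀ t ∈ P.powerset, ∀ p ∈ t, Nat.Prime p := fun t ht p hp =>
    Nat.prime_of_mem_primeFactors (Finset.mem_powerset.mp ht hp)
  have hDpos : ∀ t ∈ P.powerset, 1 ≤ ∏ p ∈ t, p := fun t ht =>
    Finset.one_le_prod' (fun p hp => (hprime t ht p hp).one_lt.le)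
  -- main term for each subset
  set main : Finset ℕ → ℝ := fun t => (-1 : ℝ) ^ t.card / (∏ p ∈ t, (p : ℝ))
      * ((Real.log x + Real.eulerMascheroniConstant) - Real.log (∏ p ∈ t, (p : ℝ)))
    with hmain
  have step2 : ∀ t ∈ P.powerset,
      |(-1 : ℝ) ^ t.card
          * ∑ n ∈ (Finset.Icc 1 N).filter (fun n => (∏ p ∈ t, p) ∣ n), (1 : ℝ) / n
        - main t| ≤ 4 / x := by
    intro t ht
    set D := ∏ p ∈ t, p with hD
    have hD1 : 1 ≤ D := hDpos t ht
    have hDcast : ((D : ℕ) : ℝ) = ∏ p ∈ t, (p : ℝ) := by rw [hD, Nat.cast_prod]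
    rw [aux_reindex D N (by omega)]
    have hterm := aux_term x hx D hD1
    have habs : |(-1 : ℝ) ^ t.card| = 1 := by
      rw [abs_pow, abs_neg, abs_one, one_pow]
    calc |(-1 : ℝ) ^ t.card * ((1 / D) * ∑ m ∈ Finset.Icc 1 (N / D), (1 : ℝ) / m) - main t|
        = |(-1 : ℝ) ^ t.card| * |(1 / D) * (∑ m ∈ Finset.Icc 1 (N / D), (1 : ℝ) / m)
            - (1 / D) * (Real.log x + Real.eulerMascheroniConstant - Real.log D)| := by
          simp only [hmain]
          rw [← hDcast, ← abs_mul]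
          congr 1
          ring
      _ ≤ 4 / x := by rw [habs, one_mul]; exact hterm
  -- Step 3: the sum of the main terms
  have step3 : ∑ t ∈ P.powerset, main t
      = ((Nat.totient q : ℝ) / q) * (Real.log x + Real.eulerMascheroniConstant
          + ∑ p ∈ P, Real.log p / ((p : ℝ) - 1)) := by
    have hs : ∀ p ∈ P, 2 ≤ p := fun p hp =>
      (Nat.prime_of_mem_primeFactors hp).two_le
    rw [hmain]
    have := aux_main P hs (Real.log x + Real.eulerMascheroniConstant)
    rw [this, aux_totient q hq]
  -- Combine
  rw [step1, ← step3]
  have hbound : |∑ t ∈ P.powerset, ((-1 : ℝ) ^ t.card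
        * ∑ n ∈ (Finset.Icc 1 N).filter (fun n => (∏ p ∈ t, p) ∣ n), (1 : ℝ) / n)
      - ∑ t ∈ P.powerset, main t| ≤ (2 ^ P.card : ℝ) * (4 / x) := by
    rw [← Finset.sum_sub_distrib]
    calc |∑ t ∈ P.powerset, ((-1 : ℝ) ^ t.card
            * ∑ n ∈ (Finset.Icc 1 N).filter (fun n => (∏ p ∈ t, p) ∣ n), (1 : ℝ) / n
          - main t)|
        ≤ ∑ t ∈ P.powerset, |(-1 : ℝ) ^ t.card
            * ∑ n ∈ (Finset.Icc 1 N).filter (fun n => (∏ p ∈ t, p) ∣ n), (1 : ℝ) / n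
          - main t| := Finset.abs_sum_le_sum_abs _ _
      _ ≤ ∑ _t ∈ P.powerset, (4 / x) := Finset.sum_le_sum step2
      _ = (2 ^ P.card : ℝ) * (4 / x) := by
          rw [Finset.sum_const, Finset.card_powerset, nsmul_eq_mul]
          push_cast
          ring
  refine hbound.trans ?_
  have hlog : (1 : ℝ) / 2 ≤ Real.log x := by
    have h2 : Real.log 2 ≤ Real.log x := Real.log_le_log (by norm_num) hx
    have := Real.log_two_gt_d9
    linarith
  have h2pow : (0 : ℝ) < (2 : ℝ) ^ P.card := by positivity
  calc (2 ^ P.card : ℝ) * (4 / x) = 4 * (2 ^ P.card : ℝ) / x := by ring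
    _ ≤ 8 * 2 ^ P.card * Real.log x / x := by
        gcongr ?_ / x
        nlinarith
end

section
/- There is an absolute constant C such that for all q ≥ 2, ∑_{n ≤ q, gcd(n,q)=1} 2^{ω(n)}/n ≤ C·(φ(q)/q)^2·(log q)^2. -/
open Finset

-- pointwise: 2^ω(n) ≤ d(n)
lemma aux_two_pow_le_card_divisors {n : ℕ} (hn : n ≠ 0) :
    2 ^ n.primeFactors.card ≤ n.divisors.card := by
  rw [Nat.card_divisors hn]
  calc 2 ^ n.primeFactors.card = ∏ p ∈ n.primeFactors, 2 := by rw [Finset.prod_const]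
    _ ≤ _ := Finset.prod_le_prod' fun p hp => by
        have := Nat.Prime.factorization_pos_of_dvd (Nat.prime_of_mem_primeFactors hp) hn
          (Nat.dvd_of_mem_primeFactors hp)
        omega

-- Weierstrass: ∏ (1 - f i) ≥ 1 - ∑ f i  for 0 ≤ f i ≤ 1
lemma aux_one_sub_sum_le_prod {ι : Type*} (s : Finset ι) (f : ι → ℝ)
    (h0 : ∀ i ∈ s, 0 ≤ f i) (h1 : ∀ i ∈ s, f i ≤ 1) :
    1 - ∑ i ∈ s, f i ≤ ∏ i ∈ s, (1 - f i) := by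
  induction s using Finset.cons_induction with
  | empty => simp
  | cons a s ha ih =>
    rw [Finset.sum_cons, Finset.prod_cons]
    have h0a := h0 a (Finset.mem_cons_self a s)
    have h1a := h1 a (Finset.mem_cons_self a s)
    have ih' := ih (fun i hi => h0 i (Finset.mem_cons_of_mem hi))
      (fun i hi => h1 i (Finset.mem_cons_of_mem hi))
    have hs : ∑ i ∈ s, f i ≥ 0 := Finset.sum_nonneg (fun i hi => h0 i (Finset.mem_cons_of_mem hi))
    nlinarith [Finset.prod_nonneg (fun i (hi : i ∈ s) => sub_nonneg.mpr (h1 i (Finset.mem_cons_of_mem hi)))]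

open Finset

lemma aux_tel (q : ℕ) (hq : 2 ≤ q) :
    ∑ k ∈ Icc 3 q, (((k : ℝ) - 1)⁻¹ - (k : ℝ)⁻¹) = 1 / 2 - (q : ℝ)⁻¹ := by
  induction q, hq using Nat.le_induction with
  | base => norm_num
  | succ n hn ih =>
    rw [Finset.sum_Icc_succ_top (by omega), ih]
    have h1 : (n : ℝ) ≥ 2 := by exact_mod_cast hn
    push_cast
    have h0 : (n : ℝ) ≠ 0 := ne_of_gt (by linarith)
    rw [add_sub_cancel_right]
    field_simp
    ring

lemma aux_sum_inv_sq (q : ℕ) (hq : 2 ≤ q) :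
    ∑ p ∈ q.primeFactors, ((p : ℝ)⁻¹) ^ 2 ≤ 3 / 4 := by
  set h : ℕ → ℝ := fun k => if k = 2 then 1 / 4 else ((k : ℝ) - 1)⁻¹ - (k : ℝ)⁻¹ with hh
  have hq0 : q ≠ 0 := by omega
  have step1 : ∑ p ∈ q.primeFactors, ((p : ℝ)⁻¹) ^ 2 ≤ ∑ p ∈ q.primeFactors, h p := by
    refine Finset.sum_le_sum fun p hp => ?_
    have hpp := Nat.prime_of_mem_primeFactors hp
    by_cases h2 : p = 2
    · simp [hh, h2]; norm_num
    · have hp3 : 3 ≤ p := by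
        have := hpp.two_le
        rcases Nat.lt_or_ge p 3 with h | h
        · omega
        · exact h
      have hx : (3 : ℝ) ≤ (p : ℝ) := by exact_mod_cast hp3
      simp only [hh, if_neg h2]
      have hx1 : (0 : ℝ) < (p : ℝ) - 1 := by linarith
      have hx0 : (0 : ℝ) < (p : ℝ) := by linarith
      rw [inv_sub_inv (ne_of_gt hx1) (ne_of_gt hx0), inv_pow, inv_eq_one_div,
        div_le_div_iff₀ (by positivity) (by positivity)]
      nlinarith
  have step2 : ∑ p ∈ q.primeFactors, h p ≤ ∑ k ∈ insert 2 (Icc 3 q), h k := by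
    refine Finset.sum_le_sum_of_subset_of_nonneg ?_ ?_
    · intro p hp
      have hpp := Nat.prime_of_mem_primeFactors hp
      have hple : p ≤ q := Nat.le_of_dvd (by omega) (Nat.dvd_of_mem_primeFactors hp)
      by_cases h2 : p = 2
      · exact Finset.mem_insert.mpr (Or.inl h2)
      · have : 3 ≤ p := by have := hpp.two_le; omega
        exact Finset.mem_insert_of_mem (Finset.mem_Icc.mpr ⟨this, hple⟩)
    · intro k hk _
      by_cases h2 : k = 2
      · simp [hh, h2]
      · have hk3 : 3 ≤ k := by
          rcases Finset.mem_insert.mp hk with h | h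
          · omega
          · exact (Finset.mem_Icc.mp h).1
        simp only [hh, if_neg h2]
        have hx : (3 : ℝ) ≤ (k : ℝ) := by exact_mod_cast hk3
        have : (k : ℝ)⁻¹ ≤ ((k : ℝ) - 1)⁻¹ := by
          apply inv_anti₀ (by linarith) (by linarith)
        linarith
  have step3 : ∑ k ∈ insert 2 (Icc 3 q), h k ≤ 3 / 4 := by
    rw [Finset.sum_insert (by simp)]
    have : ∑ k ∈ Icc 3 q, h k = ∑ k ∈ Icc 3 q, (((k : ℝ) - 1)⁻¹ - (k : ℝ)⁻¹) := by
      refine Finset.sum_congr rfl fun k hk => ?_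
      have : k ≠ 2 := by have := (Finset.mem_Icc.mp hk).1; omega
      simp [hh, this]
    rw [this, aux_tel q hq]
    simp [hh]
    have : (0:ℝ) < (q:ℝ)⁻¹ := by positivity
    linarith
  linarith

lemma aux_totient_div (q : ℕ) (hq : 2 ≤ q) :
    ((q.totient : ℝ) / q) = ∏ p ∈ q.primeFactors, (1 - (p : ℝ)⁻¹) := by
  have h := Nat.totient_eq_mul_prod_factors q
  have h' : ((q.totient : ℝ)) = (q : ℝ) * ∏ p ∈ q.primeFactors, (1 - (p : ℝ)⁻¹) := by
    have := congrArg (fun x : ℚ => (x : ℝ)) h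
    push_cast at this
    exact this
  have hq0 : (q : ℝ) ≠ 0 := by positivity
  rw [h', mul_comm, mul_div_assoc, div_self hq0, mul_one]

lemma aux_prod_one_add_le (q : ℕ) (hq : 2 ≤ q) :
    ∏ p ∈ q.primeFactors, (1 + (p : ℝ)⁻¹) ≤ ∑ d ∈ q.divisors, (d : ℝ)⁻¹ := by
  have hq0 : q ≠ 0 := by omega
  have hexp : ∏ p ∈ q.primeFactors, (1 + (p : ℝ)⁻¹)
      = ∑ t ∈ q.primeFactors.powerset, ((∏ p ∈ t, p : ℕ) : ℝ)⁻¹ := by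
    have : ∀ p ∈ q.primeFactors, (1 + (p : ℝ)⁻¹) = ((p : ℝ)⁻¹ + 1) := fun p _ => by ring
    rw [Finset.prod_congr rfl this, Finset.prod_add]
    refine Finset.sum_congr rfl fun t ht => ?_
    rw [Finset.prod_const_one, mul_one, Nat.cast_prod, ← Finset.prod_inv_distrib]
  rw [hexp]
  have hinj : Set.InjOn (fun t : Finset ℕ => ∏ p ∈ t, p) q.primeFactors.powerset := by
    intro t ht u hu h
    have ht' : ∀ p ∈ t, p.Prime := fun p hp =>
      Nat.prime_of_mem_primeFactors (Finset.mem_powerset.mp ht hp)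
    have hu' : ∀ p ∈ u, p.Prime := fun p hp =>
      Nat.prime_of_mem_primeFactors (Finset.mem_powerset.mp hu hp)
    have := Nat.primeFactors_prod ht'
    rw [show ∏ p ∈ t, p = ∏ p ∈ u, p from h, Nat.primeFactors_prod hu'] at this
    exact this.symm
  rw [show (∑ t ∈ q.primeFactors.powerset, ((∏ p ∈ t, p : ℕ) : ℝ)⁻¹)
      = ∑ m ∈ q.primeFactors.powerset.image (fun t => ∏ p ∈ t, p), (m : ℝ)⁻¹ from
    (Finset.sum_image (f := fun m : ℕ => (m : ℝ)⁻¹) (fun t ht u hu h => hinj ht hu h)).symm]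
  refine Finset.sum_le_sum_of_subset_of_nonneg ?_ (fun i _ _ => by positivity)
  intro m hm
  obtain ⟨t, ht, rfl⟩ := Finset.mem_image.mp hm
  rw [Nat.mem_divisors]
  refine ⟨dvd_trans ?_ (Nat.prod_primeFactors_dvd q), hq0⟩
  exact Finset.prod_dvd_prod_of_subset _ _ _ (Finset.mem_powerset.mp ht)

lemma aux_quarter (q : ℕ) (hq : 2 ≤ q)
    (hsq : ∑ p ∈ q.primeFactors, ((p : ℝ)⁻¹) ^ 2 ≤ 3 / 4) :
    (1 : ℝ) / 4 ≤ ((q.totient : ℝ) / q) * ∑ d ∈ q.divisors, (d : ℝ)⁻¹ := by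
  have hq0 : (0 : ℝ) < q := by positivity
  have htot : ((q.totient : ℝ) / q) = ∏ p ∈ q.primeFactors, (1 - (p : ℝ)⁻¹) :=
    aux_totient_div q hq
  have hfac : ∀ p ∈ q.primeFactors, (0:ℝ) ≤ 1 - (p : ℝ)⁻¹ := by
    intro p hp
    have h2 : 2 ≤ p := (Nat.prime_of_mem_primeFactors hp).two_le
    have hp1 : (1:ℕ) ≤ p := by omega
    have : (p:ℝ)⁻¹ ≤ 1 := by
      rw [inv_le_one_iff₀]; right; exact_mod_cast hp1
    linarith
  calc (1:ℝ)/4 = 1 - 3/4 := by norm_num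
    _ ≤ 1 - ∑ p ∈ q.primeFactors, ((p : ℝ)⁻¹) ^ 2 := by linarith
    _ ≤ ∏ p ∈ q.primeFactors, (1 - ((p : ℝ)⁻¹) ^ 2) := by
        refine aux_one_sub_sum_le_prod _ _ (fun p hp => by positivity) (fun p hp => ?_)
        have h2 : 2 ≤ p := (Nat.prime_of_mem_primeFactors hp).two_le
        have hp1 : (1:ℝ) ≤ p := by exact_mod_cast Nat.one_le_of_lt h2
        have : (p:ℝ)⁻¹ ≤ 1 := by rw [inv_le_one_iff₀]; right; exact hp1
        nlinarith [inv_nonneg.mpr (le_trans zero_le_one hp1)]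
    _ = (∏ p ∈ q.primeFactors, (1 - (p : ℝ)⁻¹)) * ∏ p ∈ q.primeFactors, (1 + (p : ℝ)⁻¹) := by
        rw [← Finset.prod_mul_distrib]
        exact Finset.prod_congr rfl fun p _ => by ring
    _ ≤ ((q.totient : ℝ) / q) * ∑ d ∈ q.divisors, (d : ℝ)⁻¹ := by
        rw [htot]
        exact mul_le_mul_of_nonneg_left (aux_prod_one_add_le q hq) (Finset.prod_nonneg hfac)

open Finset

lemma aux_harmonic (N : ℕ) : ∑ m ∈ Icc 1 N, (m : ℝ)⁻¹ ≤ 1 + Real.log N := by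
  have h := harmonic_le_one_add_log N
  rw [harmonic_eq_sum_Icc] at h
  push_cast at h
  exact h

-- L2 : sum of d(n)/n over A is ≤ T^2
lemma aux_S_le_T_sq (q : ℕ) (hq : 2 ≤ q) :
    ∑ n ∈ (Finset.Icc 1 q).filter (fun n => Nat.gcd n q = 1), (n.divisors.card : ℝ) / n
      ≤ (∑ n ∈ (Finset.Icc 1 q).filter (fun n => Nat.gcd n q = 1), (n : ℝ)⁻¹) ^ 2 := by
  set A := (Finset.Icc 1 q).filter (fun n => Nat.gcd n q = 1) with hA
  have hmem : ∀ n ∈ A, 1 ≤ n ∧ n ≤ q ∧ Nat.gcd n q = 1 := by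
    intro n hn
    rw [hA, Finset.mem_filter, Finset.mem_Icc] at hn
    exact ⟨hn.1.1, hn.1.2, hn.2⟩
  have step1 : ∑ n ∈ A, (n.divisors.card : ℝ) / n
      = ∑ x ∈ A.sigma (fun n => n.divisors), ((x.1 : ℝ))⁻¹ := by
    rw [Finset.sum_sigma]
    refine Finset.sum_congr rfl fun n hn => ?_
    rw [show (∑ s ∈ n.divisors, ((⟨n, s⟩ : Σ _ : ℕ, ℕ).fst : ℝ)⁻¹) = ∑ _s ∈ n.divisors, (n : ℝ)⁻¹
      from rfl, Finset.sum_const, nsmul_eq_mul, div_eq_mul_inv]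
  rw [step1]
  have step2 : ∑ x ∈ A.sigma (fun n => n.divisors), ((x.1 : ℝ))⁻¹
      = ∑ p ∈ (A ×ˢ A).filter (fun p => p.1 * p.2 ≤ q), ((p.1 * p.2 : ℕ) : ℝ)⁻¹ := by
    refine Finset.sum_nbij' (fun x => (x.2, x.1 / x.2)) (fun p => ⟨p.1 * p.2, p.1⟩) ?_ ?_ ?_ ?_ ?_
    · rintro ⟨n, d⟩ hx
      rw [Finset.mem_sigma] at hx
      obtain ⟨hn, hd⟩ := hx
      obtain ⟨hn1, hnq, hng⟩ := hmem n hn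
      obtain ⟨hdvd, hn0⟩ := Nat.mem_divisors.mp hd
      have hd1 : 1 ≤ d := Nat.pos_of_dvd_of_pos hdvd (by omega)
      have hdn : d ≤ n := Nat.le_of_dvd (by omega) hdvd
      have hnd_dvd : n / d ∣ n := Nat.div_dvd_of_dvd hdvd
      have hnd1 : 1 ≤ n / d := Nat.div_pos hdn (by omega)
      have hndn : n / d ≤ n := Nat.le_of_dvd (by omega) hnd_dvd
      rw [Finset.mem_filter, Finset.mem_product]
      refine ⟨⟨?_, ?_⟩, ?_⟩
      · rw [hA, Finset.mem_filter, Finset.mem_Icc]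
        exact ⟨⟨hd1, le_trans hdn hnq⟩, Nat.Coprime.coprime_dvd_left hdvd hng⟩
      · rw [hA, Finset.mem_filter, Finset.mem_Icc]
        exact ⟨⟨hnd1, le_trans hndn hnq⟩, Nat.Coprime.coprime_dvd_left hnd_dvd hng⟩
      · simpa [Nat.mul_div_cancel' hdvd] using hnq
    · rintro ⟨a, b⟩ hp
      rw [Finset.mem_filter, Finset.mem_product] at hp
      obtain ⟨⟨ha, hb⟩, habq⟩ := hp
      obtain ⟨ha1, haq, hag⟩ := hmem a ha
      obtain ⟨hb1, hbq, hbg⟩ := hmem b hb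
      rw [Finset.mem_sigma]
      constructor
      · rw [hA, Finset.mem_filter, Finset.mem_Icc]
        exact ⟨⟨Nat.one_le_iff_ne_zero.mpr (by positivity), habq⟩, Nat.Coprime.mul hag hbg⟩
      · exact Nat.mem_divisors.mpr ⟨dvd_mul_right a b, by positivity⟩
    · rintro ⟨n, d⟩ hx
      rw [Finset.mem_sigma] at hx
      obtain ⟨hdvd, hn0⟩ := Nat.mem_divisors.mp hx.2
      simp [Nat.mul_div_cancel' hdvd]
    · rintro ⟨a, b⟩ hp
      rw [Finset.mem_filter, Finset.mem_product] at hp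
      obtain ⟨ha1, _, _⟩ := hmem a hp.1.1
      simp [Nat.mul_div_cancel_left _ (by omega : 0 < a)]
    · rintro ⟨n, d⟩ hx
      rw [Finset.mem_sigma] at hx
      obtain ⟨hdvd, hn0⟩ := Nat.mem_divisors.mp hx.2
      simp [Nat.mul_div_cancel' hdvd]
  rw [step2]
  calc ∑ p ∈ (A ×ˢ A).filter (fun p => p.1 * p.2 ≤ q), ((p.1 * p.2 : ℕ) : ℝ)⁻¹
      ≤ ∑ p ∈ A ×ˢ A, ((p.1 * p.2 : ℕ) : ℝ)⁻¹ :=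
        Finset.sum_le_sum_of_subset_of_nonneg (Finset.filter_subset _ _)
          (fun p _ _ => by positivity)
    _ = (∑ n ∈ A, (n : ℝ)⁻¹) ^ 2 := by
        rw [sq, Finset.sum_mul_sum]
        rw [Finset.sum_product]
        refine Finset.sum_congr rfl fun a _ => Finset.sum_congr rfl fun b _ => ?_
        push_cast
        rw [mul_inv]

-- L3 : B * T ≤ 1 + log(q*q)
lemma aux_BT (q : ℕ) (hq : 2 ≤ q) :
    (∑ d ∈ q.divisors, (d : ℝ)⁻¹) *
        (∑ n ∈ (Finset.Icc 1 q).filter (fun n => Nat.gcd n q = 1), (n : ℝ)⁻¹)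
      ≤ 1 + Real.log (q * q : ℕ) := by
  set A := (Finset.Icc 1 q).filter (fun n => Nat.gcd n q = 1) with hA
  have hmem : ∀ n ∈ A, 1 ≤ n ∧ n ≤ q ∧ Nat.gcd n q = 1 := by
    intro n hn
    rw [hA, Finset.mem_filter, Finset.mem_Icc] at hn
    exact ⟨hn.1.1, hn.1.2, hn.2⟩
  rw [Finset.sum_mul_sum]
  have step1 : ∑ d ∈ q.divisors, ∑ n ∈ A, (d : ℝ)⁻¹ * (n : ℝ)⁻¹
      = ∑ p ∈ q.divisors ×ˢ A, ((p.1 * p.2 : ℕ) : ℝ)⁻¹ := by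
    rw [Finset.sum_product]
    refine Finset.sum_congr rfl fun a _ => Finset.sum_congr rfl fun b _ => ?_
    push_cast
    rw [mul_inv]
  rw [step1]
  have hinj : ∀ p ∈ q.divisors ×ˢ A, ∀ p' ∈ q.divisors ×ˢ A,
      p.1 * p.2 = p'.1 * p'.2 → p = p' := by
    rintro ⟨d₁, n₁⟩ hp₁ ⟨d₂, n₂⟩ hp₂ h
    rw [Finset.mem_product] at hp₁ hp₂
    obtain ⟨hd₁, hn₁⟩ := hp₁
    obtain ⟨hd₂, hn₂⟩ := hp₂
    have hd₁q := (Nat.mem_divisors.mp hd₁).1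
    have hd₂q := (Nat.mem_divisors.mp hd₂).1
    have hcop₁ : Nat.Coprime d₁ n₂ :=
      Nat.Coprime.coprime_dvd_left hd₁q (Nat.coprime_comm.mp (hmem n₂ hn₂).2.2)
    have hcop₂ : Nat.Coprime d₂ n₁ :=
      Nat.Coprime.coprime_dvd_left hd₂q (Nat.coprime_comm.mp (hmem n₁ hn₁).2.2)
    have h₁ : d₁ ∣ d₂ := hcop₁.dvd_of_dvd_mul_right ⟨n₁, by linarith [h]⟩
    have h₂ : d₂ ∣ d₁ := hcop₂.dvd_of_dvd_mul_right ⟨n₂, by linarith [h.symm]⟩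
    have hdd : d₁ = d₂ := Nat.dvd_antisymm h₁ h₂
    have hd₁0 : 0 < d₁ := Nat.pos_of_mem_divisors hd₁
    subst hdd
    have : n₁ = n₂ := by
      have := h
      exact Nat.eq_of_mul_eq_mul_left hd₁0 this
    simp [this]
  rw [show ∑ p ∈ q.divisors ×ˢ A, ((p.1 * p.2 : ℕ) : ℝ)⁻¹
      = ∑ m ∈ (q.divisors ×ˢ A).image (fun p : ℕ × ℕ => p.1 * p.2), (m : ℝ)⁻¹ from
    (Finset.sum_image (f := fun m : ℕ => (m : ℝ)⁻¹) hinj).symm]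
  calc ∑ m ∈ (q.divisors ×ˢ A).image (fun p : ℕ × ℕ => p.1 * p.2), (m : ℝ)⁻¹
      ≤ ∑ m ∈ Icc 1 (q * q), (m : ℝ)⁻¹ := by
        refine Finset.sum_le_sum_of_subset_of_nonneg ?_ (fun i _ _ => by positivity)
        intro m hm
        obtain ⟨⟨d, n⟩, hp, rfl⟩ := Finset.mem_image.mp hm
        rw [Finset.mem_product] at hp
        have hd0 : 0 < d := Nat.pos_of_mem_divisors hp.1
        have hdq : d ≤ q := Nat.le_of_dvd (by omega) (Nat.mem_divisors.mp hp.1).1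
        obtain ⟨hn1, hnq, _⟩ := hmem n hp.2
        rw [Finset.mem_Icc]
        exact ⟨Nat.one_le_iff_ne_zero.mpr (Nat.mul_ne_zero (by omega) (by omega)), Nat.mul_le_mul hdq hnq⟩
    _ ≤ 1 + Real.log (q * q : ℕ) := aux_harmonic (q * q)


open Finset in
/-- Lemma 5 (first part): `∑_{n ≤ q, (n,q)=1} 2^{ω(n)}/n ≪ (φ(q)/q)^2 (log q)^2`. -/
theorem sum_two_pow_omega_div_le :
    ∃ C : ℝ, ∀ q : ℕ, 2 ≤ q →
      (∑ n ∈ (Finset.Icc 1 q).filter (fun n => Nat.gcd n q = 1),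
          (2 : ℝ) ^ n.primeFactors.card / n) ≤
        C * ((Nat.totient q : ℝ) / q) ^ 2 * (Real.log q) ^ 2 := by
  refine ⟨256, fun q hq => ?_⟩
  set A := (Finset.Icc 1 q).filter (fun n => Nat.gcd n q = 1) with hA
  set T := ∑ n ∈ A, (n : ℝ)⁻¹ with hT
  set B := ∑ d ∈ q.divisors, (d : ℝ)⁻¹ with hB
  set r := ((Nat.totient q : ℝ) / q) with hr
  have hq0 : (0 : ℝ) < q := by positivity
  have hT0 : 0 ≤ T := Finset.sum_nonneg fun n _ => by positivity
  have hr0 : 0 < r := by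
    rw [hr]
    have := Nat.totient_pos.mpr (show 0 < q by omega)
    positivity
  have hlog2 : (1 : ℝ) / 2 < Real.log 2 := by
    have := Real.log_two_gt_d9
    linarith
  have hL : (1 : ℝ) / 2 < Real.log q := by
    refine lt_of_lt_of_le hlog2 (Real.log_le_log (by norm_num) ?_)
    exact_mod_cast hq
  have hL0 : 0 < Real.log q := by linarith
  -- step 1 : pointwise bound by divisor function
  have hstep1 : (∑ n ∈ A, (2 : ℝ) ^ n.primeFactors.card / n)
      ≤ ∑ n ∈ A, (n.divisors.card : ℝ) / n := by
    refine Finset.sum_le_sum fun n hn => ?_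
    rw [hA, Finset.mem_filter, Finset.mem_Icc] at hn
    have hn0 : n ≠ 0 := by omega
    have h2 : (2 : ℝ) ^ n.primeFactors.card ≤ (n.divisors.card : ℝ) := by
      have := aux_two_pow_le_card_divisors hn0
      exact_mod_cast this
    have hnpos : (0 : ℝ) < n := by
      have : 1 ≤ n := hn.1.1
      positivity
    exact div_le_div_of_nonneg_right (c := (n:ℝ)) h2 (le_of_lt hnpos) |>.trans_eq rfl
  -- combine
  have hS2 : (∑ n ∈ A, (n.divisors.card : ℝ) / n) ≤ T ^ 2 := aux_S_le_T_sq q hq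
  have hBT : B * T ≤ 1 + Real.log (q * q : ℕ) := aux_BT q hq
  have hlogqq : Real.log ((q * q : ℕ) : ℝ) = Real.log q + Real.log q := by
    push_cast
    exact Real.log_mul (ne_of_gt hq0) (ne_of_gt hq0)
  have hBT' : B * T ≤ 4 * Real.log q := by
    rw [hlogqq] at hBT
    linarith
  have hquarter : (1 : ℝ) / 4 ≤ r * B := aux_quarter q hq (aux_sum_inv_sq q hq)
  have hB0 : 0 < B := by nlinarith
  have hTbound : T ≤ 16 * r * Real.log q := by
    nlinarith [mul_le_mul_of_nonneg_left hquarter hT0,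
      mul_le_mul_of_nonneg_left hBT' (le_of_lt hr0)]
  have hTsq : T ^ 2 ≤ (16 * r * Real.log q) ^ 2 := by
    have h16 : 0 ≤ 16 * r * Real.log q := by positivity
    exact pow_le_pow_left₀ hT0 hTbound 2
  calc (∑ n ∈ A, (2 : ℝ) ^ n.primeFactors.card / n)
      ≤ T ^ 2 := hstep1.trans hS2
    _ ≤ (16 * r * Real.log q) ^ 2 := hTsq
    _ = 256 * r ^ 2 * Real.log q ^ 2 := by ring
end

section
/- Let k be a positive integer, Z₁, Z₂ ≥ 2, and ε > 0. If Z₁Z₂ ≤ k^{19/10}, then the number of quadruples (a,b,c,d) of positive integers with Z₁ ≤ ab < 2Z₁, Z₂ ≤ cd < 2Z₂, gcd(abcd, k) = 1, ac ≡ ±bd (mod k), and ac ≠ bd is O_ε((Z₁Z₂)^{1+ε}/k). -/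
open Finset

lemma exp_aux (δ : ℝ) (hδ : 0 < δ) :
    ∀ e : ℕ, (e + 1 : ℝ) ≤ max 1 (2 / (δ * Real.log 2)) * (2 : ℝ) ^ (δ * e) := by
  intro e
  have hlog : 0 < Real.log 2 := Real.log_pos one_lt_two
  have h2 : (0:ℝ) < (2:ℝ) ^ (δ * e) := Real.rpow_pos_of_pos two_pos _
  rcases Nat.eq_zero_or_pos e with he | he
  · subst he; simpa using le_max_left 1 (2 / (δ * Real.log 2))
  · have h1 : δ * e * Real.log 2 ≤ (2:ℝ) ^ (δ * e) := by
      rw [Real.rpow_def_of_pos two_pos, mul_comm (Real.log 2)]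
      linarith [Real.add_one_le_exp (δ * ↑e * Real.log 2)]
    have he1 : (1:ℝ) ≤ e := by exact_mod_cast he
    have hpos : 0 < δ * Real.log 2 := by positivity
    have key : (2 / (δ * Real.log 2)) * (δ * ↑e * Real.log 2) = 2 * e := by
      field_simp
    calc (e + 1 : ℝ) ≤ 2 * e := by linarith
      _ = (2 / (δ * Real.log 2)) * (δ * ↑e * Real.log 2) := key.symm
      _ ≤ (2 / (δ * Real.log 2)) * (2:ℝ) ^ (δ * e) := by
          apply mul_le_mul_of_nonneg_left h1 (by positivity)
      _ ≤ max 1 (2 / (δ * Real.log 2)) * (2:ℝ) ^ (δ * e) := by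
          apply mul_le_mul_of_nonneg_right (le_max_right _ _) h2.le

lemma divisor_bound (δ : ℝ) (hδ : 0 < δ) :
    ∃ C : ℝ, 1 ≤ C ∧ ∀ n : ℕ, n ≠ 0 → (n.divisors.card : ℝ) ≤ C * (n : ℝ) ^ δ := by
  set A := max 1 (2 / (δ * Real.log 2)) with hA
  have hA1 : (1:ℝ) ≤ A := le_max_left _ _
  have hA0 : (0:ℝ) ≤ A := by linarith
  set P₀ := ⌈(2:ℝ) ^ (1/δ)⌉₊ with hP₀
  refine ⟨A ^ (P₀ + 1), one_le_pow₀ hA1, ?_⟩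
  intro n hn
  -- n^δ as a product over prime factors
  have hcast : (n : ℝ) = ∏ p ∈ n.primeFactors, ((p : ℝ) ^ (n.factorization p)) := by
    conv_lhs => rw [← Nat.factorization_prod_pow_eq_self hn]
    rw [Nat.factorization, Finsupp.prod]
    push_cast
    rfl
  have hrpow : (n : ℝ) ^ δ = ∏ p ∈ n.primeFactors, ((p : ℝ) ^ (δ * (n.factorization p))) := by
    rw [hcast, ← Real.finset_prod_rpow _ _ (fun p _ => by positivity)]
    refine Finset.prod_congr rfl fun p hp => ?_
    rw [← Real.rpow_natCast (p:ℝ), ← Real.rpow_mul (by positivity), mul_comm]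
  -- pointwise bound
  have hpt : ∀ p ∈ n.primeFactors, ((n.factorization p : ℝ) + 1) ≤
      (if p ≤ P₀ then A else 1) * (p : ℝ) ^ (δ * (n.factorization p)) := by
    intro p hp
    have hpprime := Nat.prime_of_mem_primeFactors hp
    have hp2 : (2:ℝ) ≤ p := by exact_mod_cast hpprime.two_le
    have hppos : (0:ℝ) < p := by linarith
    set e := n.factorization p with he
    by_cases hsmall : p ≤ P₀
    · simp only [hsmall, if_true]
      calc ((e:ℝ) + 1) ≤ A * (2:ℝ) ^ (δ * e) := exp_aux δ hδ e
        _ ≤ A * (p:ℝ) ^ (δ * e) := by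
            apply mul_le_mul_of_nonneg_left _ hA0
            exact Real.rpow_le_rpow (by norm_num) hp2 (by positivity)
    · simp only [hsmall, if_false, one_mul]
      -- p > P₀ so p ≥ 2^(1/δ), hence p^δ ≥ 2
      have hpbig : (2:ℝ) ^ (1/δ) ≤ p := by
        have h1 : (P₀ : ℝ) < p := by exact_mod_cast Nat.lt_of_not_le hsmall
        have h2 : (2:ℝ) ^ (1/δ) ≤ (P₀ : ℝ) := Nat.le_ceil _
        linarith
      have h2p : (2:ℝ) ≤ (p:ℝ) ^ δ := by
        have := Real.rpow_le_rpow (by positivity) hpbig hδ.le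
        rwa [← Real.rpow_mul (by norm_num), one_div, inv_mul_cancel₀ hδ.ne',
          Real.rpow_one] at this
      calc ((e:ℝ) + 1) ≤ (2:ℝ) ^ e := by
            exact_mod_cast Nat.lt_two_pow_self (n := e)
        _ ≤ ((p:ℝ) ^ δ) ^ e := pow_le_pow_left₀ (by norm_num) h2p e
        _ = (p:ℝ) ^ (δ * e) := by
            rw [← Real.rpow_natCast ((p:ℝ)^δ), ← Real.rpow_mul hppos.le]
  -- combine
  have hd : (n.divisors.card : ℝ) = ∏ p ∈ n.primeFactors, ((n.factorization p : ℝ) + 1) := by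
    rw [Nat.card_divisors hn]; push_cast; rfl
  have hmain : (n.divisors.card : ℝ) ≤
      (∏ p ∈ n.primeFactors, (if p ≤ P₀ then A else 1)) * (n:ℝ) ^ δ := by
    rw [hd, hrpow, ← Finset.prod_mul_distrib]
    exact Finset.prod_le_prod (fun p _ => by positivity) hpt
  refine hmain.trans ?_
  apply mul_le_mul_of_nonneg_right _ (by positivity)
  have : (∏ p ∈ n.primeFactors, (if p ≤ P₀ then A else 1)) =
      A ^ ((n.primeFactors.filter (· ≤ P₀)).card) := by
    rw [← Finset.prod_const, Finset.prod_filter]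
  rw [this]
  apply pow_le_pow_right₀ hA1
  calc (n.primeFactors.filter (· ≤ P₀)).card ≤ (Finset.range (P₀ + 1)).card := by
        apply Finset.card_le_card
        intro p hp
        simp only [Finset.mem_filter] at hp
        exact Finset.mem_range.mpr (Nat.lt_succ_of_le hp.2)
    _ = P₀ + 1 := Finset.card_range _

open Finset

lemma hyp_count (δ : ℝ) (hδ : 0 < δ) :
    ∃ C : ℝ, 1 ≤ C ∧ ∀ L M : ℕ,
      (((Finset.Icc 1 L ×ˢ Finset.Icc 1 L).filter fun q : ℕ × ℕ => q.1 * q.2 ≤ M).card : ℝ)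
        ≤ C * (M : ℝ) ^ δ * M := by
  obtain ⟨C, hC1, hC⟩ := divisor_bound δ hδ
  refine ⟨C, hC1, fun L M => ?_⟩
  set s := (Finset.Icc 1 L ×ˢ Finset.Icc 1 L).filter fun q : ℕ × ℕ => q.1 * q.2 ≤ M with hs
  have hmem : ∀ q ∈ s, q.1 * q.2 ∈ Finset.Icc 1 M := by
    intro q hq
    simp only [hs, Finset.mem_filter, Finset.mem_product, Finset.mem_Icc] at hq
    exact Finset.mem_Icc.mpr ⟨Nat.one_le_iff_ne_zero.mpr
      (Nat.mul_ne_zero (by omega) (by omega)), hq.2⟩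
  have hcard := Finset.card_eq_sum_card_fiberwise hmem
  have hfiber : ∀ n ∈ Finset.Icc 1 M,
      ((s.filter fun q => q.1 * q.2 = n).card : ℝ) ≤ C * (M:ℝ) ^ δ := by
    intro n hn
    rw [Finset.mem_Icc] at hn
    have hn0 : n ≠ 0 := by omega
    have h1 : (s.filter fun q => q.1 * q.2 = n).card ≤ n.divisors.card := by
      apply Finset.card_le_card_of_injOn (fun q => q.1)
      · intro q hq
        simp only [Finset.mem_coe, Finset.mem_filter] at hq
        exact Nat.mem_divisors.mpr ⟨⟨q.2, hq.2.symm⟩, hn0⟩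
      · intro q hq q' hq' h
        dsimp only at h
        simp only [Finset.coe_filter, Set.mem_setOf_eq, hs, Finset.mem_filter,
          Finset.mem_product, Finset.mem_Icc] at hq hq'
        have h1 : q.1 ≠ 0 := by omega
        have : q.1 * q.2 = q.1 * q'.2 := by rw [hq.2, h, hq'.2]
        have := Nat.eq_of_mul_eq_mul_left (Nat.pos_of_ne_zero h1) this
        exact Prod.ext h this
    calc ((s.filter fun q => q.1 * q.2 = n).card : ℝ) ≤ (n.divisors.card : ℝ) := by
          exact_mod_cast h1
      _ ≤ C * (n:ℝ) ^ δ := hC n hn0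
      _ ≤ C * (M:ℝ) ^ δ := by
          apply mul_le_mul_of_nonneg_left _ (by linarith)
          exact Real.rpow_le_rpow (by positivity) (by exact_mod_cast hn.2) hδ.le
  calc (s.card : ℝ) = ∑ n ∈ Finset.Icc 1 M, ((s.filter fun q => q.1 * q.2 = n).card : ℝ) := by
        rw [hcard]; push_cast; rfl
    _ ≤ ∑ n ∈ Finset.Icc 1 M, C * (M:ℝ) ^ δ := Finset.sum_le_sum hfiber
    _ = (Finset.Icc 1 M).card * (C * (M:ℝ) ^ δ) := by rw [Finset.sum_const, nsmul_eq_mul]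
    _ ≤ M * (C * (M:ℝ) ^ δ) := by
        apply mul_le_mul_of_nonneg_right _ (by positivity)
        simp [Nat.card_Icc]
    _ = C * (M:ℝ) ^ δ * M := by ring

def phiP (k : ℕ) (q : ℕ × ℕ) : (ℕ × ℕ) × Bool × Bool :=
  ((min q.1 q.2, if q.1 % k = q.2 % k then (max q.1 q.2 - min q.1 q.2) / k else (q.1 + q.2) / k),
   decide (q.1 ≤ q.2), decide (q.1 % k = q.2 % k))

def psiP (k : ℕ) (r : (ℕ × ℕ) × Bool × Bool) : ℕ × ℕ :=
  let u := r.1.1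
  let m := r.1.2
  let v := if r.2.2 then u + m * k else m * k - u
  if r.2.1 then (u, v) else (v, u)

lemma psiP_phiP (k : ℕ) (hk : 0 < k) (q : ℕ × ℕ) (h1 : 1 ≤ q.1) (h2 : 1 ≤ q.2)
    (hne : q.1 ≠ q.2) (hcong : q.1 % k = q.2 % k ∨ k ∣ q.1 + q.2) :
    psiP k (phiP k q) = q := by
  obtain ⟨s, t⟩ := q
  simp only at h1 h2 hne hcong
  by_cases hc : s % k = t % k
  · rcases le_total s t with hle | hle
    · have hdvd : k ∣ t - s := (Nat.modEq_iff_dvd' hle).mp hc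
      have hmk : (t - s) / k * k = t - s := Nat.div_mul_cancel hdvd
      simp only [phiP, psiP, hc, if_true, decide_eq_true_eq, min_eq_left hle,
        max_eq_right hle, hle, decide_true, if_pos, hmk]
      simp [hmk]
      omega
    · have hdvd : k ∣ s - t := (Nat.modEq_iff_dvd' hle).mp hc.symm
      have hmk : (s - t) / k * k = s - t := Nat.div_mul_cancel hdvd
      have hlt : ¬ (s ≤ t) := by omega
      simp only [phiP, psiP, hc, if_true, min_eq_right hle, max_eq_left hle, hlt,
        decide_false, if_neg, decide_true]
      simp [hmk]
      omega
  · have hdvd : k ∣ s + t := hcong.resolve_left hc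
    have hmk : (s + t) / k * k = s + t := Nat.div_mul_cancel hdvd
    rcases le_total s t with hle | hle
    · simp only [phiP, psiP, hc, if_false, min_eq_left hle, hle, decide_true, decide_false]
      simp [hmk]
    · have hlt : ¬ (s ≤ t) := by omega
      simp only [phiP, psiP, hc, if_false, min_eq_right hle, hlt, decide_false]
      simp [hmk]

lemma phiP_bounds (k N : ℕ) (hk : 0 < k) (q : ℕ × ℕ) (h1 : 1 ≤ q.1) (h2 : 1 ≤ q.2)
    (hne : q.1 ≠ q.2) (hcong : q.1 % k = q.2 % k ∨ k ∣ q.1 + q.2) (hstN : q.1 * q.2 ≤ N) :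
    1 ≤ (phiP k q).1.1 ∧ (phiP k q).1.1 ≤ 2 * N ∧ 1 ≤ (phiP k q).1.2 ∧
      (phiP k q).1.2 ≤ 2 * N ∧ (phiP k q).1.1 * (phiP k q).1.2 * k ≤ 2 * N := by
  obtain ⟨s, t⟩ := q
  simp only at h1 h2 hne hcong hstN
  have hsN : s ≤ N := le_trans (Nat.le_mul_of_pos_right s h2) hstN
  have htN : t ≤ N := le_trans (Nat.le_mul_of_pos_left t h1) hstN
  by_cases hc : s % k = t % k
  · simp only [phiP, hc, if_true]
    have hdvd : k ∣ max s t - min s t := by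
      rcases le_total s t with hle | hle
      · rw [max_eq_right hle, min_eq_left hle]; exact (Nat.modEq_iff_dvd' hle).mp hc
      · rw [max_eq_left hle, min_eq_right hle]; exact (Nat.modEq_iff_dvd' hle).mp hc.symm
    set m := (max s t - min s t) / k with hm
    have hmk : m * k = max s t - min s t := Nat.div_mul_cancel hdvd
    have hmaxmin : min s t * max s t = s * t := by rcases le_total s t with hle | hle <;>
      simp [min_eq_left, min_eq_right, max_eq_right, max_eq_left, hle] <;> ring
    have hmaxsub : max s t - min s t ≠ 0 := by
      rcases le_total s t with hle | hle <;>
        simp [min_eq_left, min_eq_right, max_eq_right, max_eq_left, hle] <;> omega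
    have hm1 : 1 ≤ m := by
      by_contra h
      have hm0 : m = 0 := Nat.eq_zero_of_not_pos h
      rw [hm0, zero_mul] at hmk
      exact hmaxsub hmk.symm
    have hkey : min s t * m * k ≤ 2 * N := by
      calc min s t * m * k = min s t * (max s t - min s t) := by rw [mul_assoc, hmk]
        _ ≤ min s t * max s t := Nat.mul_le_mul_left _ (Nat.sub_le _ _)
        _ = s * t := hmaxmin
        _ ≤ N := hstN
        _ ≤ 2 * N := by omega
    refine ⟨le_min h1 h2, ?_, hm1, ?_, hkey⟩
    · omega
    · have : m ≤ m * k := Nat.le_mul_of_pos_right m hk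
      omega
  · have hdvd : k ∣ s + t := hcong.resolve_left hc
    simp only [phiP, hc, if_false]
    set m := (s + t) / k with hm
    have hmk : m * k = s + t := Nat.div_mul_cancel hdvd
    have hm1 : 1 ≤ m := by
      by_contra h
      have hm0 : m = 0 := Nat.eq_zero_of_not_pos h
      rw [hm0, zero_mul] at hmk
      omega
    have hkey : min s t * m * k ≤ 2 * N := by
      have h2st : min s t * (s + t) ≤ 2 * (s * t) := by
        have e1 : min s t * s ≤ t * s := Nat.mul_le_mul_right s (min_le_right s t)
        have e2 : min s t * t ≤ s * t := Nat.mul_le_mul_right t (min_le_left s t)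
        calc min s t * (s + t) = min s t * s + min s t * t := by ring
          _ ≤ t * s + s * t := Nat.add_le_add e1 e2
          _ = 2 * (s * t) := by ring
      calc min s t * m * k = min s t * (s + t) := by rw [mul_assoc, hmk]
        _ ≤ 2 * (s * t) := h2st
        _ ≤ 2 * N := by omega
    refine ⟨le_min h1 h2, ?_, hm1, ?_, hkey⟩
    · omega
    · have : m ≤ m * k := Nat.le_mul_of_pos_right m hk
      omega
set_option maxHeartbeats 1000000 in
/-- Lemma 3 (second part): if `Z₁ Z₂ ≤ k^{19/10}` then the number of such quadruples
is `≪_ε (Z₁Z₂)^{1+ε}/k`. -/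
theorem count_quadruples_small :
    ∀ ε : ℝ, 0 < ε → ∃ C : ℝ, ∀ k : ℕ, 0 < k → ∀ Z₁ Z₂ : ℝ, 2 ≤ Z₁ → 2 ≤ Z₂ →
      Z₁ * Z₂ ≤ (k : ℝ) ^ ((19 : ℝ) / 10) →
      ({p : ℕ × ℕ × ℕ × ℕ |
          0 < p.1 ∧ 0 < p.2.1 ∧ 0 < p.2.2.1 ∧ 0 < p.2.2.2 ∧
          Z₁ ≤ (p.1 * p.2.1 : ℝ) ∧ (p.1 * p.2.1 : ℝ) < 2 * Z₁ ∧
          Z₂ ≤ (p.2.2.1 * p.2.2.2 : ℝ) ∧ (p.2.2.1 * p.2.2.2 : ℝ) < 2 * Z₂ ∧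
          Nat.gcd (p.1 * p.2.1 * p.2.2.1 * p.2.2.2) k = 1 ∧
          ((p.1 * p.2.2.1 : ℤ) ≡ (p.2.1 * p.2.2.2 : ℤ) [ZMOD k] ∨
            (p.1 * p.2.2.1 : ℤ) ≡ -(p.2.1 * p.2.2.2 : ℤ) [ZMOD k]) ∧
          p.1 * p.2.2.1 ≠ p.2.1 * p.2.2.2}.ncard : ℝ) ≤
        C * (Z₁ * Z₂) ^ (1 + ε) / k := by
  intro ε hε
  have hδ : 0 < ε / 3 := by positivity
  obtain ⟨CD, hCD1, hCD⟩ := divisor_bound (ε / 3) hδ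
  obtain ⟨CH, hCH1, hCH⟩ := hyp_count (ε / 3) hδ
  refine ⟨4 * CH * CD ^ 2 * (8 : ℝ) ^ (1 + ε / 3) * (4 : ℝ) ^ (2 * (ε / 3)), ?_⟩
  intro k hk Z₁ Z₂ hZ₁ hZ₂ _
  have hX4 : (4 : ℝ) ≤ Z₁ * Z₂ := by nlinarith
  have hXpos : (0 : ℝ) < Z₁ * Z₂ := by linarith
  set X := Z₁ * Z₂ with hXdef
  set N := ⌊(4 : ℝ) * X⌋₊ with hNdef
  have hNle : (N : ℝ) ≤ 4 * X := Nat.floor_le (by positivity)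
  have hN16 : 16 ≤ N := Nat.le_floor (by push_cast; linarith)
  have hNpos : (0 : ℝ) < N := by exact_mod_cast Nat.lt_of_lt_of_le (by norm_num) hN16
  have hkpos : (0 : ℝ) < k := by exact_mod_cast hk
  have hk1 : (1 : ℝ) ≤ k := by exact_mod_cast hk
  set T := ((Finset.Icc 1 N ×ˢ Finset.Icc 1 N ×ˢ Finset.Icc 1 N ×ˢ Finset.Icc 1 N).filter
    fun p : ℕ × ℕ × ℕ × ℕ =>
      (p.1 * p.2.2.1) * (p.2.1 * p.2.2.2) ≤ N ∧
      (p.1 * p.2.2.1 % k = p.2.1 * p.2.2.2 % k ∨ k ∣ p.1 * p.2.2.1 + p.2.1 * p.2.2.2) ∧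
      p.1 * p.2.2.1 ≠ p.2.1 * p.2.2.2) with hTdef
  -- Step 1 : the set is contained in (the coercion of) T
  have step1 : ({p : ℕ × ℕ × ℕ × ℕ |
          0 < p.1 ∧ 0 < p.2.1 ∧ 0 < p.2.2.1 ∧ 0 < p.2.2.2 ∧
          Z₁ ≤ (p.1 * p.2.1 : ℝ) ∧ (p.1 * p.2.1 : ℝ) < 2 * Z₁ ∧
          Z₂ ≤ (p.2.2.1 * p.2.2.2 : ℝ) ∧ (p.2.2.1 * p.2.2.2 : ℝ) < 2 * Z₂ ∧
          Nat.gcd (p.1 * p.2.1 * p.2.2.1 * p.2.2.2) k = 1 ∧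
          ((p.1 * p.2.2.1 : ℤ) ≡ (p.2.1 * p.2.2.2 : ℤ) [ZMOD k] ∨
            (p.1 * p.2.2.1 : ℤ) ≡ -(p.2.1 * p.2.2.2 : ℤ) [ZMOD k]) ∧
          p.1 * p.2.2.1 ≠ p.2.1 * p.2.2.2}).ncard ≤ T.card := by
    have hsub : ({p : ℕ × ℕ × ℕ × ℕ |
          0 < p.1 ∧ 0 < p.2.1 ∧ 0 < p.2.2.1 ∧ 0 < p.2.2.2 ∧
          Z₁ ≤ (p.1 * p.2.1 : ℝ) ∧ (p.1 * p.2.1 : ℝ) < 2 * Z₁ ∧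
          Z₂ ≤ (p.2.2.1 * p.2.2.2 : ℝ) ∧ (p.2.2.1 * p.2.2.2 : ℝ) < 2 * Z₂ ∧
          Nat.gcd (p.1 * p.2.1 * p.2.2.1 * p.2.2.2) k = 1 ∧
          ((p.1 * p.2.2.1 : ℤ) ≡ (p.2.1 * p.2.2.2 : ℤ) [ZMOD k] ∨
            (p.1 * p.2.2.1 : ℤ) ≡ -(p.2.1 * p.2.2.2 : ℤ) [ZMOD k]) ∧
          p.1 * p.2.2.1 ≠ p.2.1 * p.2.2.2}) ⊆ (T : Set (ℕ × ℕ × ℕ × ℕ)) := by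
      rintro ⟨a, b, c, d⟩ hp
      obtain ⟨ha, hb, hc, hd, hab1, hab2, hcd1, hcd2, -, hcong, hne⟩ := hp
      simp only at ha hb hc hd hab1 hab2 hcd1 hcd2 hcong hne
      have ha1 : (1 : ℝ) ≤ a := by exact_mod_cast ha
      have hb1 : (1 : ℝ) ≤ b := by exact_mod_cast hb
      have hc1 : (1 : ℝ) ≤ c := by exact_mod_cast hc
      have hd1 : (1 : ℝ) ≤ d := by exact_mod_cast hd
      have habX : ((a : ℝ) * b) < 4 * X := by rw [hXdef]; nlinarith
      have hcdX : ((c : ℝ) * d) < 4 * X := by rw [hXdef]; nlinarith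
      have haN : a ≤ N := Nat.le_floor (by push_cast; nlinarith)
      have hbN : b ≤ N := Nat.le_floor (by push_cast; nlinarith)
      have hcN : c ≤ N := Nat.le_floor (by push_cast; nlinarith)
      have hdN : d ≤ N := Nat.le_floor (by push_cast; nlinarith)
      have hstN : (a * c) * (b * d) ≤ N := by
        apply Nat.le_floor
        push_cast
        nlinarith
      have hcong' : a * c % k = b * d % k ∨ k ∣ a * c + b * d := by
        rcases hcong with h | h
        · left
          have h' : ((a * c : ℕ) : ℤ) ≡ ((b * d : ℕ) : ℤ) [ZMOD (k : ℕ)] := by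
            push_cast; exact h
          exact Int.natCast_modEq_iff.mp h'
        · right
          have h2 : (k : ℤ) ∣ -((a : ℤ) * c + (b : ℤ) * d) := by
            have := h.dvd
            have e : -((b : ℤ) * d) - (a : ℤ) * c = -((a : ℤ) * c + (b : ℤ) * d) := by ring
            rwa [e] at this
          have h3 : (k : ℤ) ∣ ((a * c + b * d : ℕ) : ℤ) := by
            push_cast
            exact (dvd_neg).mp h2
          exact_mod_cast h3
      rw [hTdef]
      simp only [Finset.coe_filter, Set.mem_setOf_eq, Finset.mem_product, Finset.mem_Icc]
      exact ⟨⟨⟨ha, haN⟩, ⟨hb, hbN⟩, ⟨hc, hcN⟩, ⟨hd, hdN⟩⟩, hstN, hcong', hne⟩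
    calc _ ≤ (T : Set (ℕ × ℕ × ℕ × ℕ)).ncard := Set.ncard_le_ncard hsub T.finite_toSet
      _ = T.card := Set.ncard_coe_finset T
  -- Step 2 : fiber over (s,t) = (ac, bd)
  set P := ((Finset.Icc 1 N ×ˢ Finset.Icc 1 N).filter fun q : ℕ × ℕ =>
      q.1 * q.2 ≤ N ∧ (q.1 % k = q.2 % k ∨ k ∣ q.1 + q.2) ∧ q.1 ≠ q.2) with hPdef
  have hmapTP : ∀ p ∈ T, (p.1 * p.2.2.1, p.2.1 * p.2.2.2) ∈ P := by
    intro p hp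
    rw [hTdef] at hp
    simp only [Finset.mem_filter, Finset.mem_product, Finset.mem_Icc] at hp
    obtain ⟨⟨⟨ha1, haN⟩, ⟨hb1, hbN⟩, ⟨hc1, hcN⟩, hd1, hdN⟩, hstN, hcong, hne⟩ := hp
    rw [hPdef]
    simp only [Finset.mem_filter, Finset.mem_product, Finset.mem_Icc]
    have hs1 : 1 ≤ p.1 * p.2.2.1 := Nat.one_le_iff_ne_zero.mpr (Nat.mul_ne_zero (by omega) (by omega))
    have ht1 : 1 ≤ p.2.1 * p.2.2.2 := Nat.one_le_iff_ne_zero.mpr (Nat.mul_ne_zero (by omega) (by omega))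
    have hsN : p.1 * p.2.2.1 ≤ N :=
      le_trans (Nat.le_mul_of_pos_right _ ht1) hstN
    have htN : p.2.1 * p.2.2.2 ≤ N :=
      le_trans (Nat.le_mul_of_pos_left _ hs1) hstN
    exact ⟨⟨⟨hs1, hsN⟩, ht1, htN⟩, hstN, hcong, hne⟩
  have hfib : ∀ q ∈ P, ((T.filter fun p : ℕ × ℕ × ℕ × ℕ =>
      (p.1 * p.2.2.1, p.2.1 * p.2.2.2) = q).card : ℝ) ≤ (CD * (N : ℝ) ^ (ε / 3)) ^ 2 := by
    intro q hq
    rw [hPdef] at hq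
    simp only [Finset.mem_filter, Finset.mem_product, Finset.mem_Icc] at hq
    obtain ⟨⟨⟨hq1, hq1N⟩, hq2, hq2N⟩, -, -, -⟩ := hq
    have hcard1 : (T.filter fun p : ℕ × ℕ × ℕ × ℕ =>
        (p.1 * p.2.2.1, p.2.1 * p.2.2.2) = q).card ≤ (q.1.divisors ×ˢ q.2.divisors).card := by
      apply Finset.card_le_card_of_injOn (fun p => (p.1, p.2.1))
      · intro p hp
        simp only [Finset.mem_coe, Finset.mem_filter] at hp
        obtain ⟨-, hpq⟩ := hp
        have h1 : p.1 * p.2.2.1 = q.1 := congrArg Prod.fst hpq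
        have h2 : p.2.1 * p.2.2.2 = q.2 := congrArg Prod.snd hpq
        simp only [Finset.mem_coe, Finset.mem_product, Nat.mem_divisors]
        exact ⟨⟨⟨p.2.2.1, h1.symm⟩, by omega⟩, ⟨p.2.2.2, h2.symm⟩, by omega⟩
      · intro p hp p' hp' heq
        simp only [Finset.coe_filter, Set.mem_setOf_eq] at hp hp'
        obtain ⟨hpT, hpq⟩ := hp
        obtain ⟨hpT', hpq'⟩ := hp'
        rw [hTdef] at hpT hpT'
        simp only [Finset.mem_filter, Finset.mem_product, Finset.mem_Icc] at hpT hpT'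
        dsimp only at heq
        have e1 : p.1 = p'.1 := (Prod.ext_iff.mp heq).1
        have e2 : p.2.1 = p'.2.1 := (Prod.ext_iff.mp heq).2
        have a1 : p.1 * p.2.2.1 = q.1 := congrArg Prod.fst hpq
        have a1' : p'.1 * p'.2.2.1 = q.1 := congrArg Prod.fst hpq'
        have a2 : p.2.1 * p.2.2.2 = q.2 := congrArg Prod.snd hpq
        have a2' : p'.2.1 * p'.2.2.2 = q.2 := congrArg Prod.snd hpq'
        have hs : p.1 * p.2.2.1 = p'.1 * p'.2.2.1 := by rw [a1, a1']
        have ht : p.2.1 * p.2.2.2 = p'.2.1 * p'.2.2.2 := by rw [a2, a2']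
        rw [← e1] at hs
        rw [← e2] at ht
        have e3 : p.2.2.1 = p'.2.2.1 :=
          Nat.eq_of_mul_eq_mul_left (by omega) hs
        have e4 : p.2.2.2 = p'.2.2.2 :=
          Nat.eq_of_mul_eq_mul_left (by omega) ht
        exact Prod.ext e1 (Prod.ext e2 (Prod.ext e3 e4))
    have hdiv1 : (q.1.divisors.card : ℝ) ≤ CD * (N : ℝ) ^ (ε / 3) := by
      calc (q.1.divisors.card : ℝ) ≤ CD * (q.1 : ℝ) ^ (ε / 3) := hCD q.1 (by omega)
        _ ≤ CD * (N : ℝ) ^ (ε / 3) := by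
            apply mul_le_mul_of_nonneg_left _ (by linarith)
            exact Real.rpow_le_rpow (by positivity) (by exact_mod_cast hq1N) hδ.le
    have hdiv2 : (q.2.divisors.card : ℝ) ≤ CD * (N : ℝ) ^ (ε / 3) := by
      calc (q.2.divisors.card : ℝ) ≤ CD * (q.2 : ℝ) ^ (ε / 3) := hCD q.2 (by omega)
        _ ≤ CD * (N : ℝ) ^ (ε / 3) := by
            apply mul_le_mul_of_nonneg_left _ (by linarith)
            exact Real.rpow_le_rpow (by positivity) (by exact_mod_cast hq2N) hδ.le
    calc ((T.filter fun p : ℕ × ℕ × ℕ × ℕ =>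
          (p.1 * p.2.2.1, p.2.1 * p.2.2.2) = q).card : ℝ)
        ≤ ((q.1.divisors ×ˢ q.2.divisors).card : ℝ) := by exact_mod_cast hcard1
      _ = (q.1.divisors.card : ℝ) * (q.2.divisors.card : ℝ) := by
          rw [Finset.card_product]; push_cast; ring
      _ ≤ (CD * (N : ℝ) ^ (ε / 3)) * (CD * (N : ℝ) ^ (ε / 3)) := by
          apply mul_le_mul hdiv1 hdiv2 (by positivity) (by positivity)
      _ = (CD * (N : ℝ) ^ (ε / 3)) ^ 2 := by ring
  have step2 : (T.card : ℝ) ≤ (P.card : ℝ) * (CD * (N : ℝ) ^ (ε / 3)) ^ 2 := by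
    have hcount := Finset.card_eq_sum_card_fiberwise hmapTP
    calc (T.card : ℝ)
        = ∑ q ∈ P, ((T.filter fun p : ℕ × ℕ × ℕ × ℕ =>
            (p.1 * p.2.2.1, p.2.1 * p.2.2.2) = q).card : ℝ) := by
          rw [hcount]; push_cast; rfl
      _ ≤ ∑ q ∈ P, (CD * (N : ℝ) ^ (ε / 3)) ^ 2 := Finset.sum_le_sum hfib
      _ = (P.card : ℝ) * (CD * (N : ℝ) ^ (ε / 3)) ^ 2 := by
          rw [Finset.sum_const, nsmul_eq_mul]
  -- Step 3 : encode pairs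
  set M := 2 * N / k with hMdef
  set H := ((Finset.Icc 1 (2 * N) ×ˢ Finset.Icc 1 (2 * N)).filter
      fun q : ℕ × ℕ => q.1 * q.2 ≤ M) with hHdef
  have step3 : P.card ≤ H.card * 4 := by
    have hinj : P.card ≤ (H ×ˢ (Finset.univ : Finset (Bool × Bool))).card := by
      apply Finset.card_le_card_of_injOn (phiP k)
      · intro q hq
        rw [hPdef] at hq
        simp only [Finset.mem_coe, Finset.mem_filter, Finset.mem_product, Finset.mem_Icc] at hq
        obtain ⟨⟨⟨hq1, hq1N⟩, hq2, hq2N⟩, hqN, hcong, hne⟩ := hq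
        obtain ⟨hu1, hu2, hm1, hm2, hkey⟩ := phiP_bounds k N hk q hq1 hq2 hne hcong hqN
        rw [Finset.mem_coe, Finset.mem_product]
        refine ⟨?_, Finset.mem_univ _⟩
        rw [hHdef]
        simp only [Finset.mem_filter, Finset.mem_product, Finset.mem_Icc]
        exact ⟨⟨⟨hu1, hu2⟩, hm1, hm2⟩, (Nat.le_div_iff_mul_le hk).mpr hkey⟩
      · intro q hq q' hq' heq
        simp only [Finset.coe_filter, Set.mem_setOf_eq, hPdef, Finset.mem_filter,
          Finset.mem_product, Finset.mem_Icc] at hq hq'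
        have h1 := psiP_phiP k hk q hq.1.1.1 hq.1.2.1 hq.2.2.2 hq.2.2.1
        have h2 := psiP_phiP k hk q' hq'.1.1.1 hq'.1.2.1 hq'.2.2.2 hq'.2.2.1
        rw [← h1, ← h2, heq]
    calc P.card ≤ (H ×ˢ (Finset.univ : Finset (Bool × Bool))).card := hinj
      _ = H.card * 4 := by rw [Finset.card_product]; simp
  -- Step 4 : hyperbola count
  have step4 : (H.card : ℝ) ≤ CH * (M : ℝ) ^ (ε / 3) * M := by
    rw [hHdef]
    exact hCH (2 * N) M
  -- Final assembly
  have hMle : (M : ℝ) ≤ 2 * (N : ℝ) / k := by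
    rw [hMdef]
    have := Nat.cast_div_le (α := ℝ) (m := 2 * N) (n := k)
    push_cast at this
    exact this
  have hMX : (M : ℝ) ≤ 8 * X := by
    calc (M : ℝ) ≤ 2 * (N : ℝ) / k := hMle
      _ ≤ 2 * (N : ℝ) / 1 := by
          apply div_le_div_of_nonneg_left (by positivity) (by norm_num) hk1
      _ = 2 * (N : ℝ) := div_one _
      _ ≤ 8 * X := by linarith
  have hXr : (0 : ℝ) < X := hXpos
  have h8X : (0 : ℝ) < 8 * X := by linarith
  have e1 : ((8 * X) ^ (ε / 3) * (8 * X) : ℝ) = 8 ^ (1 + ε / 3) * X ^ (1 + ε / 3) := by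
    rw [← Real.mul_rpow (by norm_num) hXr.le, Real.rpow_add h8X, Real.rpow_one]
    ring
  have e2 : (((4 * X) ^ (ε / 3)) ^ 2 : ℝ) = 4 ^ (2 * (ε / 3)) * X ^ (2 * (ε / 3)) := by
    rw [← Real.rpow_natCast ((4 * X) ^ (ε / 3)) 2, ← Real.rpow_mul (by positivity),
      ← Real.mul_rpow (by norm_num) hXr.le]
    norm_num
    rw [mul_comm (ε / 3) 2]
  have e3 : (X ^ (1 + ε / 3) * X ^ (2 * (ε / 3)) : ℝ) = X ^ (1 + ε) := by
    rw [← Real.rpow_add hXr]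
    ring_nf
  calc (({p : ℕ × ℕ × ℕ × ℕ |
          0 < p.1 ∧ 0 < p.2.1 ∧ 0 < p.2.2.1 ∧ 0 < p.2.2.2 ∧
          Z₁ ≤ (p.1 * p.2.1 : ℝ) ∧ (p.1 * p.2.1 : ℝ) < 2 * Z₁ ∧
          Z₂ ≤ (p.2.2.1 * p.2.2.2 : ℝ) ∧ (p.2.2.1 * p.2.2.2 : ℝ) < 2 * Z₂ ∧
          Nat.gcd (p.1 * p.2.1 * p.2.2.1 * p.2.2.2) k = 1 ∧
          ((p.1 * p.2.2.1 : ℤ) ≡ (p.2.1 * p.2.2.2 : ℤ) [ZMOD k] ∨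
            (p.1 * p.2.2.1 : ℤ) ≡ -(p.2.1 * p.2.2.2 : ℤ) [ZMOD k]) ∧
          p.1 * p.2.2.1 ≠ p.2.1 * p.2.2.2}).ncard : ℝ)
      ≤ (T.card : ℝ) := by exact_mod_cast step1
    _ ≤ (P.card : ℝ) * (CD * (N : ℝ) ^ (ε / 3)) ^ 2 := step2
    _ ≤ ((H.card : ℝ) * 4) * (CD * (N : ℝ) ^ (ε / 3)) ^ 2 := by
        have : (P.card : ℝ) ≤ (H.card : ℝ) * 4 := by exact_mod_cast step3
        apply mul_le_mul_of_nonneg_right this (by positivity)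
    _ ≤ ((CH * (M : ℝ) ^ (ε / 3) * M) * 4) * (CD * (N : ℝ) ^ (ε / 3)) ^ 2 := by
        apply mul_le_mul_of_nonneg_right _ (by positivity)
        apply mul_le_mul_of_nonneg_right step4 (by norm_num)
    _ = 4 * CH * CD ^ 2 * (((M : ℝ) ^ (ε / 3)) * M) * ((N : ℝ) ^ (ε / 3)) ^ 2 := by ring
    _ ≤ 4 * CH * CD ^ 2 * (((8 * X) ^ (ε / 3)) * (2 * (N : ℝ) / k)) *
          (((4 * X) ^ (ε / 3)) ^ 2) := by
        have m1 : ((M : ℝ)) ^ (ε / 3) * (M : ℝ) ≤ ((8 * X) ^ (ε / 3)) * (2 * (N : ℝ) / k) :=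
          mul_le_mul (Real.rpow_le_rpow (Nat.cast_nonneg M) hMX hδ.le) hMle
            (Nat.cast_nonneg M) (by positivity)
        have m2 : (((N : ℝ)) ^ (ε / 3)) ^ 2 ≤ (((4 * X) ^ (ε / 3))) ^ 2 :=
          pow_le_pow_left₀ (by positivity)
            (Real.rpow_le_rpow (Nat.cast_nonneg N) hNle hδ.le) 2
        have h0 : (0 : ℝ) ≤ 4 * CH * CD ^ 2 := by positivity
        exact mul_le_mul (mul_le_mul_of_nonneg_left m1 h0) m2 (by positivity) (by positivity)
    _ ≤ 4 * CH * CD ^ 2 * (((8 * X) ^ (ε / 3)) * (8 * X / k)) *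
          (((4 * X) ^ (ε / 3)) ^ 2) := by
        have m1 : 2 * (N : ℝ) / k ≤ 8 * X / k := by
          gcongr ?_ / k
          linarith
        have m2 : ((8 * X) ^ (ε / 3)) * (2 * (N : ℝ) / k) ≤
            ((8 * X) ^ (ε / 3)) * (8 * X / k) :=
          mul_le_mul_of_nonneg_left m1 (by positivity)
        apply mul_le_mul_of_nonneg_right _ (by positivity)
        exact mul_le_mul_of_nonneg_left m2 (by positivity)
    _ = (4 * CH * CD ^ 2 * (8 : ℝ) ^ (1 + ε / 3) * (4 : ℝ) ^ (2 * (ε / 3))) *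
          X ^ (1 + ε) / k := by
        have hsplit : 4 * CH * CD ^ 2 * (((8 * X) ^ (ε / 3)) * (8 * X / k)) *
            (((4 * X) ^ (ε / 3)) ^ 2) =
            4 * CH * CD ^ 2 * (((8 * X) ^ (ε / 3)) * (8 * X)) *
            (((4 * X) ^ (ε / 3)) ^ 2) / k := by ring
        rw [hsplit, e1, e2, ← e3]
        ring
end
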